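/- arXiv:2602.09808 — 6 statements merged into one kernel-verified Lean document; each statement's English description precedes it below -/
import Mathlib

section
/- Let X be a reflexive Banach space and Φ, ψ : X → (-∞,+∞] with ψ convex, lower semicontinuous, ψ(0) < ∞ and ψ continuous at 0. Define the relaxed slope S⁻(x) = inf{ liminf_n ψ*(-z_n) : z_n ∈ ∂Φ(x_n), x_n → x } for x in the closure of dom Φ. If S⁻(x) < ∞, then there exists z ∈ ∂_ℓ Φ(x) (the limiting subdifferential) with ψ*(-z) ≤ S⁻(x). -/
open NormedSpace Filter Topology

/-- Fenchel conjugate of an `EReal`-valued function on a normed space. -/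
noncomputable def fenchelConj {X : Type*} [NormedAddCommGroup X] [NormedSpace ℝ X]
    (Φ : X → EReal) (z : StrongDual ℝ X) : EReal :=
  ⨆ x : X, ((z x : EReal) - Φ x)

/-- Fréchet (viscosity) subdifferential of `Φ : X → (-∞,+∞]` at `x`. -/
def FrechetSubdiff {X : Type*} [NormedAddCommGroup X] [NormedSpace ℝ X]
    (Φ : X → EReal) (x : X) (z : StrongDual ℝ X) : Prop :=
  Φ x ≠ ⊤ ∧ ∀ ε : ℝ, 0 < ε → ∃ δ > (0 : ℝ), ∀ y : X, ‖y - x‖ < δ →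
    Φ x + ((z (y - x) - ε * ‖y - x‖ : ℝ) : EReal) ≤ Φ y

/-- Limiting subdifferential: weak limits of Fréchet subgradients along strongly convergent
base points. -/
def LimitingSubdiff {X : Type*} [NormedAddCommGroup X] [NormedSpace ℝ X]
    (Φ : X → EReal) (x : X) (z : StrongDual ℝ X) : Prop :=
  ∃ (xs : ℕ → X) (zs : ℕ → StrongDual ℝ X),
    (∀ n, FrechetSubdiff Φ (xs n) (zs n)) ∧
    Tendsto xs atTop (𝓝 x) ∧
    ∀ v : X, Tendsto (fun n => zs n v) atTop (𝓝 (z v))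

/-- The relaxed `ψ*`-slope
`S⁻(x) = inf { liminf_n ψ*(-z_n) : z_n ∈ ∂Φ(x_n), x_n → x }` (with `inf ∅ = +∞`,
which happens exactly when `x` is outside the closure of `dom Φ`). -/
noncomputable def relaxedSlope {X : Type*} [NormedAddCommGroup X] [NormedSpace ℝ X]
    (Φ ψ : X → EReal) (x : X) : EReal :=
  sInf {L : EReal | ∃ (xs : ℕ → X) (zs : ℕ → StrongDual ℝ X),
    (∀ n, FrechetSubdiff Φ (xs n) (zs n)) ∧ Tendsto xs atTop (𝓝 x) ∧
    L = Filter.liminf (fun n => fenchelConj ψ (-(zs n))) atTop}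

private lemma opNorm_le_of_ball_bound' {X : Type*} [NormedAddCommGroup X] [NormedSpace ℝ X]
    (w : StrongDual ℝ X) {δ B : ℝ} (hδ : 0 < δ) (h : ∀ v : X, ‖v‖ ≤ δ → |w v| ≤ B) :
    ‖w‖ ≤ B / δ := by
  have hB : 0 ≤ B := by
    have := h 0 (by simp [hδ.le])
    simpa using (abs_nonneg (w 0)).trans this
  refine ContinuousLinearMap.opNorm_le_bound _ (div_nonneg hB hδ.le) (fun v => ?_)
  rcases eq_or_ne v 0 with rfl | hv
  · simp
  · have hvn : 0 < ‖v‖ := norm_pos_iff.mpr hv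
    set u : X := (δ / ‖v‖) • v with hu
    have hun : ‖u‖ = δ := by
      rw [hu, norm_smul, Real.norm_eq_abs, abs_of_pos (div_pos hδ hvn),
        div_mul_cancel₀ _ hvn.ne']
    have h1 : |w u| ≤ B := h u (le_of_eq hun)
    have h2 : w u = (δ / ‖v‖) * w v := by rw [hu, map_smul]; rfl
    rw [h2, abs_mul, abs_of_pos (div_pos hδ hvn)] at h1
    rw [Real.norm_eq_abs]
    calc |w v| = (‖v‖ / δ) * ((δ / ‖v‖) * |w v|) := by
          field_simp
      _ ≤ (‖v‖ / δ) * B := by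
          exact mul_le_mul_of_nonneg_left h1 (div_nonneg hvn.le hδ.le)
      _ = B / δ * ‖v‖ := by ring

private lemma exists_weak_limit' {X : Type*} [NormedAddCommGroup X] [NormedSpace ℝ X]
    [TopologicalSpace.SeparableSpace X]
    (w : ℕ → StrongDual ℝ X) {M : ℝ} (hM : ∀ k, ‖w k‖ ≤ M) :
    ∃ (φ : ℕ → ℕ) (z : StrongDual ℝ X), StrictMono φ ∧
      ∀ v : X, Tendsto (fun j => w (φ j) v) atTop (𝓝 (z v)) := by
  have hM0 : 0 ≤ M := (norm_nonneg _).trans (hM 0)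
  have : Nonempty X := ⟨0⟩
  set D : ℕ → X := TopologicalSpace.denseSeq X with hDdef
  have hD : DenseRange D := TopologicalSpace.denseRange_denseSeq X
  -- compactness in the product space
  set K : Set (ℕ → ℝ) := Set.univ.pi (fun m => Set.Icc (-(M * ‖D m‖)) (M * ‖D m‖)) with hK
  have hKc : IsCompact K := isCompact_univ_pi (fun m => isCompact_Icc)
  have hmem : ∀ k, (fun m => w k (D m)) ∈ K := by
    intro k
    rw [hK, Set.mem_univ_pi]
    intro m
    have h1 : |w k (D m)| ≤ M * ‖D m‖ := by
      calc |w k (D m)| ≤ ‖w k‖ * ‖D m‖ := (w k).le_opNorm (D m)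
        _ ≤ M * ‖D m‖ := mul_le_mul_of_nonneg_right (hM k) (norm_nonneg _)
    exact abs_le.mp h1 |>.imp (fun h => h) (fun h => h) |> fun h => ⟨h.1, h.2⟩
  obtain ⟨c, -, φ, hφ, hconv⟩ := hKc.isSeqCompact hmem
  have hpt : ∀ m, Tendsto (fun j => w (φ j) (D m)) atTop (𝓝 (c m)) := by
    intro m
    exact (tendsto_pi_nhds.mp hconv) m
  -- Cauchyness of (w (φ j) v) for every v
  have key : ∀ v : X, ∃ l : ℝ, Tendsto (fun j => w (φ j) v) atTop (𝓝 l) := by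
    intro v
    refine cauchySeq_tendsto_of_complete ?_
    rw [Metric.cauchySeq_iff]
    intro ε hε
    have hε4 : 0 < ε / (4 * (M + 1)) := by positivity
    obtain ⟨m, hm⟩ := hD.exists_dist_lt v hε4
    obtain ⟨N, hN⟩ := Metric.cauchySeq_iff.mp (hpt m).cauchySeq (ε/2) (by positivity)
    refine ⟨N, fun j hj j' hj' => ?_⟩
    have hbnd : ∀ i : ℕ, dist (w (φ i) v) (w (φ i) (D m)) ≤ ε/4 := by
      intro i
      have h1 : dist (w (φ i) v) (w (φ i) (D m)) ≤ ‖w (φ i)‖ * dist v (D m) := by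
        rw [dist_eq_norm, ← map_sub, dist_eq_norm]
        exact (w (φ i)).le_opNorm _
      have h2 : ‖w (φ i)‖ * dist v (D m) ≤ M * (ε / (4 * (M+1))) := by
        apply mul_le_mul (hM _) hm.le dist_nonneg hM0
      have h3 : M * (ε / (4 * (M+1))) ≤ ε/4 := by
        have h41 : (0:ℝ) < 4 * (M + 1) := by linarith
        rw [mul_div_assoc']
        rw [div_le_div_iff₀ h41 (by norm_num : (0:ℝ) < 4)]
        nlinarith [hε.le, hM0]
      linarith
    calc dist (w (φ j) v) (w (φ j') v)
        ≤ dist (w (φ j) v) (w (φ j) (D m)) + dist (w (φ j) (D m)) (w (φ j') (D m))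
          + dist (w (φ j') (D m)) (w (φ j') v) := dist_triangle4 _ _ _ _
      _ < ε/4 + ε/2 + ε/4 := by
          have := hbnd j
          have := hbnd j'
          have := hN j hj j' hj'
          rw [dist_comm (w (φ j') (D m))]
          linarith [hbnd j, hbnd j', hN j hj j' hj']
      _ = ε := by ring
  choose g hg using key
  have gadd : ∀ u v : X, g (u + v) = g u + g v := by
    intro u v
    refine tendsto_nhds_unique (hg (u + v)) ?_
    have := (hg u).add (hg v)
    simpa [map_add] using this
  have gsmul : ∀ (a : ℝ) (v : X), g (a • v) = a * g v := by
    intro a v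
    refine tendsto_nhds_unique (hg (a • v)) ?_
    have := (hg v).const_mul a
    simpa [map_smul, smul_eq_mul] using this
  set L : X →ₗ[ℝ] ℝ :=
    { toFun := g, map_add' := gadd, map_smul' := gsmul } with hL
  have hbound : ∀ v : X, ‖L v‖ ≤ M * ‖v‖ := by
    intro v
    have h1 : Tendsto (fun j => ‖w (φ j) v‖) atTop (𝓝 ‖g v‖) := (hg v).norm
    refine le_of_tendsto h1 (Eventually.of_forall (fun j => ?_))
    calc ‖w (φ j) v‖ ≤ ‖w (φ j)‖ * ‖v‖ := (w (φ j)).le_opNorm v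
      _ ≤ M * ‖v‖ := mul_le_mul_of_nonneg_right (hM _) (norm_nonneg _)
  exact ⟨φ, LinearMap.mkContinuous L M hbound, hφ, hg⟩

/-- In a reflexive separable Banach space, if `ψ` is convex, lsc, finite and continuous at `0`,
and the relaxed slope `S⁻(x)` is finite, then there exists a limiting subgradient
`z ∈ ∂_ℓΦ(x)` with `ψ*(-z) ≤ S⁻(x)`. -/
theorem exists_limiting_subgradient_attaining_relaxed_slope
    {X : Type*} [NormedAddCommGroup X] [NormedSpace ℝ X] [CompleteSpace X]
    [TopologicalSpace.SeparableSpace X]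
    (hrefl : Function.Surjective (NormedSpace.inclusionInDoubleDual ℝ X))
    (Φ ψ : X → EReal) (hψbot : ∀ v, ψ v ≠ ⊥)
    (hψconv : ∀ x y : X, ∀ a b : ℝ, 0 ≤ a → 0 ≤ b → a + b = 1 →
      ψ (a • x + b • y) ≤ (a : EReal) * ψ x + (b : EReal) * ψ y)
    (hψlsc : LowerSemicontinuous ψ)
    (hψ0 : ψ 0 ≠ ⊤) (hψcont : ContinuousAt ψ 0)
    (x : X) (hx : relaxedSlope Φ ψ x < ⊤) :
    ∃ z : StrongDual ℝ X, LimitingSubdiff Φ x z ∧ fenchelConj ψ (-z) ≤ relaxedSlope Φ ψ x := by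
  classical
  set s := relaxedSlope Φ ψ x with hsdef
  -- the approximating real sequence r
  set r : ℕ → ℝ := fun k => if s = ⊥ then -(k : ℝ) else s.toReal + 1/((k:ℝ)+1) with hrdef
  have hrs : ∀ k, s < ((r k : ℝ) : EReal) := by
    intro k
    by_cases hb : s = ⊥
    · rw [hb]
      exact EReal.bot_lt_coe _
    · have hs' : s = ((s.toReal : ℝ) : EReal) := (EReal.coe_toReal hx.ne hb).symm
      rw [hrdef]
      simp only [hb, if_false]
      rw [hs']
      have hpos : (0:ℝ) < 1/((k:ℝ)+1) := by positivity
      exact_mod_cast lt_add_of_pos_right s.toReal hpos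
  set R : ℝ := if s = ⊥ then 0 else s.toReal + 1 with hRdef
  have hrR : ∀ k, r k ≤ R := by
    intro k
    by_cases hb : s = ⊥
    · simp [hrdef, hRdef, hb]
    · simp only [hrdef, hRdef, hb, if_false]
      have : 1/((k:ℝ)+1) ≤ 1 := by
        rw [div_le_one (by positivity)]
        simp
      linarith
  have hrtend : Tendsto (fun k => ((r k : ℝ) : EReal)) atTop (𝓝 s) := by
    by_cases hb : s = ⊥
    · rw [hb]
      rw [EReal.tendsto_nhds_bot_iff_real]
      intro M
      have hev : ∀ᶠ k : ℕ in atTop, -M < (k : ℝ) := by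
        obtain ⟨n, hn⟩ := exists_nat_gt (-M)
        filter_upwards [eventually_ge_atTop n] with k hk
        exact hn.trans_le (by exact_mod_cast hk)
      filter_upwards [hev] with k hk
      simp only [hrdef, hb, if_true]
      exact_mod_cast (by linarith : -(k:ℝ) < M)
    · have hs' : s = ((s.toReal : ℝ) : EReal) := (EReal.coe_toReal hx.ne hb).symm
      rw [hs', EReal.tendsto_coe]
      simp only [hrdef, hb, if_false]
      have : Tendsto (fun k : ℕ => s.toReal + 1/((k:ℝ)+1)) atTop (𝓝 (s.toReal + 0)) :=
        tendsto_const_nhds.add tendsto_one_div_add_atTop_nhds_zero_nat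
      simpa using this
  -- select approximating points
  have sel : ∀ k : ℕ, ∃ (yk : X) (wk : StrongDual ℝ X), FrechetSubdiff Φ yk wk ∧
      ‖yk - x‖ < 1/((k:ℝ)+1) ∧ fenchelConj ψ (-wk) < ((r k : ℝ) : EReal) := by
    intro k
    have h1 : sInf {L : EReal | ∃ (xs : ℕ → X) (zs : ℕ → StrongDual ℝ X),
        (∀ n, FrechetSubdiff Φ (xs n) (zs n)) ∧ Tendsto xs atTop (𝓝 x) ∧
        L = Filter.liminf (fun n => fenchelConj ψ (-(zs n))) atTop} < ((r k : ℝ) : EReal) :=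
      hrs k
    obtain ⟨L, hL, hLlt⟩ := sInf_lt_iff.mp h1
    obtain ⟨xs, zs, hfs, hxs, rfl⟩ := hL
    have hfreq : ∃ᶠ n in atTop, fenchelConj ψ (-(zs n)) < ((r k : ℝ) : EReal) :=
      frequently_lt_of_liminf_lt (by isBoundedDefault) hLlt
    have hev : ∀ᶠ n in atTop, ‖xs n - x‖ < 1/((k:ℝ)+1) := by
      have hball := hxs (Metric.ball_mem_nhds x (by positivity : (0:ℝ) < 1/((k:ℝ)+1)))
      filter_upwards [hball] with n hn
      rw [← dist_eq_norm]
      exact hn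
    obtain ⟨n, hn1, hn2⟩ := (hfreq.and_eventually hev).exists
    exact ⟨xs n, zs n, hfs n, hn2, hn1⟩
  choose y w hfs hclose hslope using sel
  -- uniform bound on the subgradients
  have hψ0' : ψ 0 = (((ψ 0).toReal : ℝ) : EReal) := (EReal.coe_toReal hψ0 (hψbot 0)).symm
  set c : ℝ := (ψ 0).toReal with hcdef
  have hlt : ψ 0 < ((c + 1 : ℝ) : EReal) := by
    rw [hψ0']
    exact_mod_cast lt_add_one c
  have hnb : ∀ᶠ v in 𝓝 (0 : X), ψ v < ((c + 1 : ℝ) : EReal) :=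
    hψcont (isOpen_Iio.mem_nhds hlt)
  obtain ⟨δ, hδpos, hδ⟩ := Metric.eventually_nhds_iff.mp hnb
  set B : ℝ := |R| + |c| + 2 with hBdef
  have hwb : ∀ k, ‖w k‖ ≤ B / (δ/2) := by
    intro k
    refine opNorm_le_of_ball_bound' _ (half_pos hδpos) (fun v hv => ?_)
    have keyu : ∀ u : X, ‖u‖ ≤ δ/2 → -(w k) u ≤ R + c + 1 := by
      intro u hu
      have hψu : ψ u < ((c + 1 : ℝ) : EReal) := by
        apply hδ
        rw [dist_zero_right]
        linarith
      have h1 : (((-(w k)) u : ℝ) : EReal) - ((c + 1 : ℝ) : EReal) ≤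
          (((-(w k)) u : ℝ) : EReal) - ψ u := EReal.sub_le_sub le_rfl hψu.le
      have h2 : (((-(w k)) u : ℝ) : EReal) - ψ u ≤ fenchelConj ψ (-(w k)) :=
        le_iSup (fun v => (((-(w k)) v : ℝ) : EReal) - ψ v) u
      have h3 : (((-(w k)) u : ℝ) : EReal) - ((c + 1 : ℝ) : EReal) ≤ ((R : ℝ) : EReal) := by
        refine (h1.trans h2).trans ((hslope k).le.trans ?_)
        exact_mod_cast hrR k
      rw [← EReal.coe_sub] at h3
      have h4 : (-(w k)) u - (c + 1) ≤ R := by exact_mod_cast h3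
      simp only [ContinuousLinearMap.neg_apply] at h4 ⊢
      linarith
    have h5 := keyu v hv
    have h6 := keyu (-v) (by rwa [norm_neg])
    simp only [ContinuousLinearMap.neg_apply, map_neg, neg_neg] at h5 h6
    rw [abs_le]
    constructor
    · have : R + c + 1 ≤ B := by
        rw [hBdef]
        have := le_abs_self R
        have := le_abs_self c
        linarith
      linarith
    · have : R + c + 1 ≤ B := by
        rw [hBdef]
        have := le_abs_self R
        have := le_abs_self c
        linarith
      linarith
  -- extract a weak-* convergent subsequence
  obtain ⟨φ, z, hφ, hz⟩ := exists_weak_limit' w hwb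
  refine ⟨z, ⟨fun j => y (φ j), fun j => w (φ j), fun j => hfs (φ j), ?_, hz⟩, ?_⟩
  · -- strong convergence of the base points
    rw [tendsto_iff_norm_sub_tendsto_zero]
    refine squeeze_zero (fun j => norm_nonneg _) (fun j => ?_)
      tendsto_one_div_add_atTop_nhds_zero_nat
    refine (hclose (φ j)).le.trans ?_
    apply one_div_le_one_div_of_le (by positivity)
    have : (j : ℝ) ≤ (φ j : ℝ) := by exact_mod_cast hφ.le_apply
    linarith
  · -- the slope inequality
    have h2 : Filter.liminf (fun j => fenchelConj ψ (-(w (φ j)))) atTop ≤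
        Filter.liminf (fun j => ((r (φ j) : ℝ) : EReal)) atTop :=
      liminf_le_liminf (Eventually.of_forall (fun j => (hslope (φ j)).le))
    have h3 : Filter.liminf (fun j => ((r (φ j) : ℝ) : EReal)) atTop = s :=
      (hrtend.comp hφ.tendsto_atTop).liminf_eq
    refine le_trans ?_ (h2.trans_eq h3)
    rw [fenchelConj]
    refine iSup_le (fun v => ?_)
    by_cases hv : ψ v = ⊤
    · rw [hv, EReal.sub_top]
      exact bot_le
    · obtain ⟨b, hb⟩ : ∃ b : ℝ, ψ v = ((b : ℝ) : EReal) :=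
        ⟨(ψ v).toReal, (EReal.coe_toReal hv (hψbot v)).symm⟩
      rw [hb, ← EReal.coe_sub]
      have htd : Tendsto (fun j => ((((-(w (φ j))) v : ℝ) - b : ℝ) : EReal)) atTop
          (𝓝 ((((-z) v : ℝ) - b : ℝ) : EReal)) := by
        rw [EReal.tendsto_coe]
        simp only [ContinuousLinearMap.neg_apply]
        exact ((hz v).neg).sub_const b
      rw [← htd.liminf_eq]
      refine liminf_le_liminf (Eventually.of_forall (fun j => ?_))
      rw [EReal.coe_sub]
      have := le_iSup (fun u => (((-(w (φ j))) u : ℝ) : EReal) - ψ u) v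
      rw [hb] at this
      exact this
end

section
/- Let X be a reflexive separable Banach space and Φ : X → (-∞,+∞]. Then the graph of the limiting subdifferential, {(x,z) ∈ X × X* : z ∈ ∂_ℓΦ(x)}, is a Borel subset of X × X* with the product of strong topologies. -/
open NormedSpace Filter Topology

/-- Bounded piece of the limiting subdifferential graph. -/
def limSubBddSet {X : Type*} [NormedAddCommGroup X] [NormedSpace ℝ X]
    (Φ : X → EReal) (R : ℝ) : Set (X × StrongDual ℝ X) :=
  {p | ∃ (xs : ℕ → X) (zs : ℕ → StrongDual ℝ X),
    (∀ n, FrechetSubdiff Φ (xs n) (zs n)) ∧ (∀ n, ‖zs n‖ ≤ R) ∧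
    Tendsto xs atTop (𝓝 p.1) ∧ ∀ v : X, Tendsto (fun n => zs n v) atTop (𝓝 (p.2 v))}

lemma limSubBddSet_norm_le {X : Type*} [NormedAddCommGroup X] [NormedSpace ℝ X]
    {Φ : X → EReal} {R : ℝ} (hR : 0 ≤ R) {p : X × StrongDual ℝ X}
    (hp : p ∈ limSubBddSet Φ R) : ‖p.2‖ ≤ R := by
  obtain ⟨xs, zs, _, hbd, _, hconv⟩ := hp
  refine ContinuousLinearMap.opNorm_le_bound _ hR fun v => ?_
  have ht : Tendsto (fun n => ‖zs n v‖) atTop (𝓝 ‖p.2 v‖) := (hconv v).norm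
  refine le_of_tendsto ht (Eventually.of_forall fun n => ?_)
  calc ‖zs n v‖ ≤ ‖zs n‖ * ‖v‖ := (zs n).le_opNorm v
    _ ≤ R * ‖v‖ := by
        have := hbd n
        have := norm_nonneg v
        nlinarith

lemma isClosed_limSubBddSet {X : Type*} [NormedAddCommGroup X] [NormedSpace ℝ X]
    [CompleteSpace X] [TopologicalSpace.SeparableSpace X]
    (Φ : X → EReal) {R : ℝ} (hR : 0 ≤ R) : IsClosed (limSubBddSet Φ R) := by
  haveI : Nonempty X := ⟨0⟩
  obtain ⟨u, hu⟩ := TopologicalSpace.exists_dense_seq X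
  refine IsSeqClosed.isClosed ?_
  intro p q hmem hconv
  have hnorm : ∀ k, ‖(p k).2‖ ≤ R := fun k => limSubBddSet_norm_le hR (hmem k)
  choose xs zs hF hbd hx hz using hmem
  have hp1 : Tendsto (fun k => (p k).1) atTop (𝓝 q.1) := (continuous_fst.tendsto q).comp hconv
  have hp2 : Tendsto (fun k => (p k).2) atTop (𝓝 q.2) := (continuous_snd.tendsto q).comp hconv
  have hq2 : ‖q.2‖ ≤ R :=
    le_of_tendsto hp2.norm (Eventually.of_forall hnorm)
  -- diagonal selection
  have hsel : ∀ k : ℕ, ∃ n : ℕ, ‖xs k n - (p k).1‖ < 1/(k+1) ∧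
      ∀ m ∈ Finset.range (k+1), ‖zs k n (u m) - (p k).2 (u m)‖ < 1/(k+1) := by
    intro k
    have hpos : (0:ℝ) < 1/(k+1) := by positivity
    have e1 : ∀ᶠ n in atTop, ‖xs k n - (p k).1‖ < 1/(k+1) := by
      have := (hx k).eventually (Filter.eventually_mem_set.mpr
        (Metric.ball_mem_nhds (p k).1 hpos))
      exact this.mono fun n hn => by simpa [dist_eq_norm] using hn
    have e2 : ∀ᶠ n in atTop, ∀ m ∈ Finset.range (k+1),
        ‖zs k n (u m) - (p k).2 (u m)‖ < 1/(k+1) := by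
      refine (Filter.eventually_all_finset _).mpr fun m _ => ?_
      have := (hz k (u m)).eventually (Filter.eventually_mem_set.mpr
        (Metric.ball_mem_nhds ((p k).2 (u m)) hpos))
      exact this.mono fun n hn => by simpa [dist_eq_norm] using hn
    exact (e1.and e2).exists
  choose n hn1 hn2 using hsel
  refine ⟨fun k => xs k (n k), fun k => zs k (n k), fun k => hF k (n k),
    fun k => hbd k (n k), ?_, ?_⟩
  · -- strong convergence of base points
    rw [tendsto_iff_dist_tendsto_zero]
    have hup : Tendsto (fun k : ℕ => 1/((k:ℝ)+1) + dist ((p k).1) q.1) atTop (𝓝 (0 + 0)) :=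
      (tendsto_one_div_add_atTop_nhds_zero_nat).add (tendsto_iff_dist_tendsto_zero.mp hp1)
    rw [add_zero] at hup
    refine squeeze_zero (fun k => dist_nonneg) (fun k => ?_) hup
    calc dist (xs k (n k)) q.1 ≤ dist (xs k (n k)) ((p k).1) + dist ((p k).1) q.1 :=
          dist_triangle _ _ _
      _ ≤ 1/((k:ℝ)+1) + dist ((p k).1) q.1 := by
          have := hn1 k
          rw [dist_eq_norm]
          linarith
  · -- pointwise (weak*) convergence of the diagonal subgradients
    intro v
    rw [Metric.tendsto_atTop]
    intro ε hε
    have hR1 : (0:ℝ) < R + 1 := by linarith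
    set ε' : ℝ := ε / (4 * (R + 1)) with hε'def
    have hε' : 0 < ε' := by positivity
    obtain ⟨m, hm⟩ := hu.exists_dist_lt v hε'
    rw [dist_eq_norm] at hm
    -- choose K1 controlling ‖(p k).2 - q.2‖
    have t2 : Tendsto (fun k => ‖(p k).2 - q.2‖) atTop (𝓝 0) :=
      tendsto_iff_norm_sub_tendsto_zero.mp hp2
    have hd : (0:ℝ) < ε / (4 * (‖u m‖ + 1)) := by positivity
    obtain ⟨K1, hK1⟩ := (Metric.tendsto_atTop.mp t2) _ hd
    -- choose K2 controlling 1/(k+1)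
    obtain ⟨K2, hK2⟩ := (Metric.tendsto_atTop.mp
      (tendsto_one_div_add_atTop_nhds_zero_nat (𝕜 := ℝ))) (ε/4) (by positivity)
    refine ⟨max m (max K1 K2), fun k hk => ?_⟩
    have hkm : m ≤ k := le_trans (le_max_left _ _) hk
    have hkK1 : K1 ≤ k := le_trans (le_trans (le_max_left _ _) (le_max_right _ _)) hk
    have hkK2 : K2 ≤ k := le_trans (le_trans (le_max_right _ _) (le_max_right _ _)) hk
    have hsmall : 1/((k:ℝ)+1) < ε/4 := by
      have := hK2 k hkK2
      rw [Real.dist_eq] at this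
      have h0 : (0:ℝ) ≤ 1/((k:ℝ)+1) := by positivity
      calc 1/((k:ℝ)+1) ≤ |1/((k:ℝ)+1) - 0| := by rw [sub_zero]; exact le_abs_self _
        _ < ε/4 := this
    have hPQ : ‖(p k).2 - q.2‖ < ε / (4 * (‖u m‖ + 1)) := by
      have := hK1 k hkK1
      rw [Real.dist_eq, sub_zero] at this
      exact (le_abs_self _).trans_lt this
    -- the four terms
    have h1 : ‖(zs k (n k)) (v - u m)‖ ≤ ε/4 := by
      calc ‖(zs k (n k)) (v - u m)‖ ≤ ‖zs k (n k)‖ * ‖v - u m‖ := (zs k (n k)).le_opNorm _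
        _ ≤ (R+1) * ε' := by
            have h := hbd k (n k)
            have h2 := norm_nonneg (zs k (n k))
            nlinarith [hm.le, norm_nonneg (v - u m)]
        _ = ε/4 := by rw [hε'def]; field_simp
    have h4 : ‖q.2 (u m - v)‖ ≤ ε/4 := by
      calc ‖q.2 (u m - v)‖ ≤ ‖q.2‖ * ‖u m - v‖ := q.2.le_opNorm _
        _ ≤ (R+1) * ε' := by
            have h2 := norm_nonneg q.2
            rw [norm_sub_rev]
            nlinarith [hm.le, norm_nonneg (v - u m)]
        _ = ε/4 := by rw [hε'def]; field_simp
    have h2 : ‖(zs k (n k)) (u m) - (p k).2 (u m)‖ < ε/4 :=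
      lt_trans (hn2 k m (Finset.mem_range.mpr (Nat.lt_succ_of_le hkm))) hsmall
    have h3 : ‖(p k).2 (u m) - q.2 (u m)‖ < ε/4 := by
      have hle : ‖(p k).2 (u m) - q.2 (u m)‖ ≤ ‖(p k).2 - q.2‖ * ‖u m‖ := by
        have := ((p k).2 - q.2).le_opNorm (u m)
        simpa using this
      have hlt : ‖(p k).2 - q.2‖ * ‖u m‖ < ε/4 := by
        have hn0 := norm_nonneg (u m)
        have hq0 := norm_nonneg ((p k).2 - q.2)
        have key : ‖(p k).2 - q.2‖ * ‖u m‖ ≤ (ε / (4 * (‖u m‖ + 1))) * ‖u m‖ := by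
          nlinarith
        have key2 : (ε / (4 * (‖u m‖ + 1))) * ‖u m‖ < ε/4 := by
          rw [div_mul_eq_mul_div, div_lt_div_iff₀ (by positivity) (by norm_num)]
          nlinarith
        linarith
      linarith
    -- combine
    have hid : (zs k (n k)) v - q.2 v =
        (zs k (n k)) (v - u m) + ((zs k (n k)) (u m) - (p k).2 (u m)) +
        ((p k).2 (u m) - q.2 (u m)) + q.2 (u m - v) := by
      simp only [map_sub]
      ring
    rw [Real.dist_eq, ← Real.norm_eq_abs, hid]
    calc ‖(zs k (n k)) (v - u m) + ((zs k (n k)) (u m) - (p k).2 (u m)) +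
          ((p k).2 (u m) - q.2 (u m)) + q.2 (u m - v)‖
        ≤ ‖(zs k (n k)) (v - u m) + ((zs k (n k)) (u m) - (p k).2 (u m)) +
          ((p k).2 (u m) - q.2 (u m))‖ + ‖q.2 (u m - v)‖ := norm_add_le _ _
      _ ≤ ‖(zs k (n k)) (v - u m) + ((zs k (n k)) (u m) - (p k).2 (u m))‖ +
          ‖(p k).2 (u m) - q.2 (u m)‖ + ‖q.2 (u m - v)‖ := by
            have := norm_add_le ((zs k (n k)) (v - u m) +
              ((zs k (n k)) (u m) - (p k).2 (u m))) ((p k).2 (u m) - q.2 (u m))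
            linarith
      _ ≤ ‖(zs k (n k)) (v - u m)‖ + ‖(zs k (n k)) (u m) - (p k).2 (u m)‖ +
          ‖(p k).2 (u m) - q.2 (u m)‖ + ‖q.2 (u m - v)‖ := by
            have := norm_add_le ((zs k (n k)) (v - u m))
              ((zs k (n k)) (u m) - (p k).2 (u m))
            linarith
      _ < ε := by linarith

/-- In a reflexive separable Banach space, the graph of the limiting subdifferential of any
`Φ : X → (-∞,+∞]` is a Borel subset of `X × X*` for the product of the strong topologies. -/
theorem limitingSubdiff_graph_borel
    {X : Type*} [NormedAddCommGroup X] [NormedSpace ℝ X] [CompleteSpace X]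
    [TopologicalSpace.SeparableSpace X]
    (hrefl : Function.Surjective (NormedSpace.inclusionInDoubleDual ℝ X))
    (Φ : X → EReal) (hbot : ∀ x, Φ x ≠ ⊥) :
    @MeasurableSet (X × StrongDual ℝ X) (borel (X × StrongDual ℝ X))
      {p : X × StrongDual ℝ X | LimitingSubdiff Φ p.1 p.2} := by
  letI : MeasurableSpace (X × StrongDual ℝ X) := borel _
  haveI : BorelSpace (X × StrongDual ℝ X) := ⟨rfl⟩
  have hset : {p : X × StrongDual ℝ X | LimitingSubdiff Φ p.1 p.2} =
      ⋃ R : ℕ, limSubBddSet Φ R := by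
    ext p
    simp only [Set.mem_setOf_eq, Set.mem_iUnion]
    constructor
    · rintro ⟨xs, zs, hF, hx, hz⟩
      have hb : ∀ v : X, ∃ C, ∀ i : ℕ, ‖zs i v‖ ≤ C := by
        intro v
        obtain ⟨C, hC⟩ := (hz v).norm.bddAbove_range
        exact ⟨C, fun i => hC ⟨i, rfl⟩⟩
      obtain ⟨C, hC⟩ := banach_steinhaus hb
      exact ⟨⌈C⌉₊, xs, zs, hF, fun i => (hC i).trans (Nat.le_ceil C), hx, hz⟩
    · rintro ⟨R, xs, zs, hF, _, hx, hz⟩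
      exact ⟨xs, zs, hF, hx, hz⟩
  rw [hset]
  exact MeasurableSet.iUnion fun R =>
    (isClosed_limSubBddSet Φ (by positivity : (0:ℝ) ≤ (R:ℝ))).measurableSet
end

section
/- Let X be a separable reflexive Banach space, D a countable subset of the unit ball of X* with dense span, and ‖x‖_ω̄ = (Σ_n ⟨z_n,x⟩²/n²)^{1/2}. Then the original norm x ↦ ‖x‖ is lower semicontinuous with respect to the topology induced by ‖·‖_ω̄. -/
open NormedSpace Filter Topology
open scoped ENNReal
open scoped NNReal

/-- The weak auxiliary norm `‖x‖_ω̄ = (Σ_n ⟨z_n,x⟩²/n²)^{1/2}` associated with a countable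
family `z` in the unit ball of `X*`. -/
noncomputable def omegaNorm {X : Type*} [NormedAddCommGroup X] [NormedSpace ℝ X]
    (z : ℕ → StrongDual ℝ X) (x : X) : ℝ :=
  Real.sqrt (∑' n : ℕ, (z n x) ^ 2 / ((n : ℝ) + 1) ^ 2)

theorem zk_bound' {X : Type*} [NormedAddCommGroup X] [NormedSpace ℝ X]
    (z : ℕ → StrongDual ℝ X) (hz : ∀ n, ‖z n‖ ≤ 1) (w : X) (k : ℕ) :
    |z k w| ≤ ((k : ℝ) + 1) * Real.sqrt (∑' n : ℕ, (z n w) ^ 2 / ((n : ℝ) + 1) ^ 2) := by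
  have habs : ∀ n : ℕ, |z n w| ≤ ‖w‖ := by
    intro n
    calc |z n w| = ‖z n w‖ := (Real.norm_eq_abs _).symm
    _ ≤ ‖z n‖ * ‖w‖ := (z n).le_opNorm w
    _ ≤ 1 * ‖w‖ := by gcongr; exact hz n
    _ = ‖w‖ := one_mul _
  have hle : ∀ n : ℕ, (z n w) ^ 2 / ((n : ℝ) + 1) ^ 2 ≤ ‖w‖ ^ 2 * (1 / ((n : ℝ) + 1) ^ 2) := by
    intro n
    rw [mul_one_div, div_le_div_iff_of_pos_right (by positivity)]
    rw [← sq_abs]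
    exact pow_le_pow_left₀ (abs_nonneg _) (habs n) 2
  have hsum : Summable (fun n : ℕ => (z n w) ^ 2 / ((n : ℝ) + 1) ^ 2) := by
    apply Summable.of_nonneg_of_le (fun n => by positivity) hle
    apply Summable.mul_left
    have : Summable (fun n : ℕ => 1 / (n : ℝ) ^ 2) := Real.summable_one_div_nat_pow.2 one_lt_two
    have := (summable_nat_add_iff 1).2 this
    simpa using this
  have hterm : (z k w) ^ 2 / ((k : ℝ) + 1) ^ 2 ≤ ∑' n : ℕ, (z n w) ^ 2 / ((n : ℝ) + 1) ^ 2 :=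
    Summable.le_tsum hsum k (fun n _ => by positivity)
  rw [← Real.sqrt_sq (by positivity : (0:ℝ) ≤ ((k:ℝ)+1)), ← Real.sqrt_mul (by positivity)]
  rw [← Real.sqrt_sq (abs_nonneg (z k w))]
  apply Real.sqrt_le_sqrt
  rw [sq_abs]
  rw [div_le_iff₀ (by positivity)] at hterm
  linarith [hterm]

/-- In a separable reflexive Banach space, the original norm is (sequentially) lower
semicontinuous with respect to the topology induced by `‖·‖_ω̄`. -/
theorem norm_lowerSemicontinuous_omegaNorm
    {X : Type*} [NormedAddCommGroup X] [NormedSpace ℝ X] [CompleteSpace X]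
    [TopologicalSpace.SeparableSpace X]
    (hrefl : Function.Surjective (NormedSpace.inclusionInDoubleDual ℝ X))
    (z : ℕ → StrongDual ℝ X) (hz : ∀ n, ‖z n‖ ≤ 1)
    (hdense : Dense (↑(Submodule.span ℝ (Set.range z)) : Set (StrongDual ℝ X))) :
    ∀ (x : X) (xs : ℕ → X),
      Tendsto (fun n => omegaNorm z (xs n - x)) atTop (𝓝 0) →
      (‖x‖₊ : ℝ≥0∞) ≤ Filter.liminf (fun n => (‖xs n‖₊ : ℝ≥0∞)) atTop := by
  intro x xs hconv
  set l := Filter.liminf (fun n => (‖xs n‖₊ : ℝ≥0∞)) atTop with hl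
  rcases eq_or_ne l ⊤ with htop | hfin
  · rw [htop]; exact le_top
  -- l is finite
  obtain ⟨c, hc⟩ : ∃ c : ℝ≥0, l = (c : ℝ≥0∞) := ⟨l.toNNReal, (ENNReal.coe_toNNReal hfin).symm⟩
  -- step 1: each generator converges pointwise
  have hgen : ∀ k : ℕ, Tendsto (fun n => z k (xs n - x)) atTop (𝓝 0) := by
    intro k
    have hb : ∀ n, |z k (xs n - x)| ≤ ((k : ℝ) + 1) * omegaNorm z (xs n - x) :=
      fun n => zk_bound' z hz (xs n - x) k
    have h0 : Tendsto (fun n => ((k : ℝ) + 1) * omegaNorm z (xs n - x)) atTop (𝓝 0) := by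
      simpa using hconv.const_mul ((k : ℝ) + 1)
    have hlow : Tendsto (fun n => -(((k : ℝ) + 1) * omegaNorm z (xs n - x))) atTop (𝓝 0) := by
      simpa using h0.neg
    refine tendsto_of_tendsto_of_tendsto_of_le_of_le hlow h0 (fun n => ?_) (fun n => ?_)
    · have := hb n; rw [abs_le] at this; linarith [this.1]
    · have := hb n; rw [abs_le] at this; linarith [this.2]
  -- step 2: all elements of the span converge pointwise
  have hspan : ∀ g ∈ Submodule.span ℝ (Set.range z),
      Tendsto (fun n => g (xs n - x)) atTop (𝓝 0) := by
    intro g hg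
    induction hg using Submodule.span_induction with
    | mem g hg => obtain ⟨k, rfl⟩ := hg; exact hgen k
    | zero => simpa using tendsto_const_nhds
    | add g h _ _ hgc hhc => simpa using hgc.add hhc
    | smul a g _ hgc => simpa using hgc.const_mul a
  -- step 3: for g in the span, |g x| ≤ ‖g‖ * c
  have hkey : ∀ g ∈ Submodule.span ℝ (Set.range z), |g x| ≤ ‖g‖ * c := by
    intro g hg
    refine le_of_forall_pos_le_add (fun ε hε => ?_)
    set δ := ε / (‖g‖ + 1) with hδ
    have hδpos : 0 < δ := by positivity
    -- frequently ‖xs n‖ < c + δ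
    have hfreq : ∃ᶠ n in atTop, (‖xs n‖₊ : ℝ≥0∞) < (c : ℝ≥0∞) + ENNReal.ofReal δ := by
      apply Filter.frequently_lt_of_liminf_lt
      · isBoundedDefault
      · rw [← hl, hc]
        exact ENNReal.lt_add_right (by simp) (by simp [ENNReal.ofReal_eq_zero, not_le, hδpos])
    -- also g (xs n) → g x
    have hgx : Tendsto (fun n => g (xs n)) atTop (𝓝 (g x)) := by
      have := hspan g hg
      have h2 : Tendsto (fun n => g (xs n - x) + g x) atTop (𝓝 (0 + g x)) :=
        this.add tendsto_const_nhds
      simpa [map_sub] using h2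
    by_contra hcon
    push_neg at hcon
    have hev : ∀ᶠ n in atTop, ‖g‖ * (c + δ) < |g (xs n)| := by
      have : Tendsto (fun n => |g (xs n)|) atTop (𝓝 (|g x|)) := hgx.abs
      apply this.eventually_const_lt
      calc ‖g‖ * (c + δ) = ‖g‖ * c + ‖g‖ * δ := by ring
      _ ≤ ‖g‖ * c + (‖g‖ + 1) * δ := by gcongr; linarith [norm_nonneg g]
      _ = ‖g‖ * c + ε := by rw [hδ]; field_simp
      _ < |g x| := hcon
    obtain ⟨n, hn1, hn2⟩ := (hfreq.and_eventually hev).exists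
    have hxs : ‖xs n‖ < (c : ℝ) + δ := by
      have h := hn1
      rw [← enorm_eq_nnnorm, ← ofReal_norm, ← ENNReal.ofReal_coe_nnreal,
        ← ENNReal.ofReal_add (by positivity) hδpos.le,
        ENNReal.ofReal_lt_ofReal_iff_of_nonneg (norm_nonneg _)] at h
      exact h
    have : |g (xs n)| ≤ ‖g‖ * (c + δ) := by
      calc |g (xs n)| = ‖g (xs n)‖ := (Real.norm_eq_abs _).symm
      _ ≤ ‖g‖ * ‖xs n‖ := g.le_opNorm _
      _ ≤ ‖g‖ * ((c : ℝ) + δ) := mul_le_mul_of_nonneg_left hxs.le (norm_nonneg g)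
    linarith
  -- step 4: extend to all of the dual by density
  have hall : ∀ g : StrongDual ℝ X, |g x| ≤ ‖g‖ * c := by
    have hclosed : IsClosed {g : StrongDual ℝ X | |g x| ≤ ‖g‖ * c} := by
      apply isClosed_le
      · exact (ContinuousLinearMap.apply ℝ ℝ x).continuous.abs
      · exact continuous_norm.mul continuous_const
    intro g
    have : closure (↑(Submodule.span ℝ (Set.range z)) : Set (StrongDual ℝ X)) ⊆
        {g : StrongDual ℝ X | |g x| ≤ ‖g‖ * c} :=
      closure_minimal hkey hclosed
    rw [hdense.closure_eq] at this
    exact this (Set.mem_univ g)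
  -- step 5: conclude via the double dual isometry
  have hnorm : ‖x‖ ≤ c := by
    have := (inclusionInDoubleDualLi ℝ (E := X)).norm_map x
    rw [← this]
    apply ContinuousLinearMap.opNorm_le_bound _ c.coe_nonneg
    intro g
    rw [mul_comm]
    exact (Real.norm_eq_abs _).trans_le (hall g)
  rw [hl] at hc ⊢
  rw [hc, ENNReal.coe_le_coe]
  rwa [← NNReal.coe_le_coe, coe_nnnorm]
end

section
/- Under the same assumptions on Ψ (proper convex lsc in v, bounded below by a superlinear G, sup_y Ψ(y,0) < ∞, Ψ* jointly upper semicontinuous), for every bounded continuous ζ : Y → X* and every μ ∈ 𝓜₊(Y) one has ∫_Y Ψ*(y, ζ(y)) dμ(y) = sup{ ∫_Y (⟨ζ(y), v(y)⟩ - Ψ(y, v(y))) dμ(y) : v ∈ L¹_μ(Y;X) }. -/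
open MeasureTheory NormedSpace Filter Topology
open Set
open scoped ENNReal NNReal

/-- The nonnegative part of an extended real, in `[0,∞]`. -/
noncomputable def erealToENNReal (x : EReal) : ℝ≥0∞ :=
  if x = ⊤ then ⊤ else ENNReal.ofReal x.toReal

/-- Integral of an `EReal`-valued function, defined as the difference of the lower integrals of
the positive and negative parts. -/
noncomputable def eint {Y : Type*} [MeasurableSpace Y] (μ : Measure Y) (f : Y → EReal) :
    EReal :=
  ((∫⁻ y, erealToENNReal (f y) ∂μ : ℝ≥0∞) : EReal) -
    ((∫⁻ y, erealToENNReal (-(f y)) ∂μ : ℝ≥0∞) : EReal)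

/-- The partial Fenchel conjugate of `Ψ` in its second variable:
`Ψ*(y,z) = sup_v (⟨z,v⟩ - Ψ(y,v))`. -/
noncomputable def partialConj {Y : Type*} {X : Type*} [NormedAddCommGroup X] [NormedSpace ℝ X]
    (Ψ : Y × X → EReal) (p : Y × StrongDual ℝ X) : EReal :=
  ⨆ v : X, ((p.2 v : EReal) - Ψ (p.1, v))


lemma erealToENNReal_mono : Monotone erealToENNReal := by
  intro x y hxy
  unfold erealToENNReal
  split_ifs with h1 h2 h2
  · exact le_refl _
  · exact absurd (h1 ▸ hxy) (by simp [top_le_iff, h2])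
  · exact le_top
  · induction x with
    | bot => simp
    | coe a =>
      induction y with
      | bot => simp at hxy
      | coe b => exact ENNReal.ofReal_le_ofReal (by exact_mod_cast hxy)
      | top => simp at h2
    | top => simp at h1

lemma erealToENNReal_coe (a : ℝ) : erealToENNReal (a : EReal) = ENNReal.ofReal a := by
  unfold erealToENNReal
  rw [if_neg (by simp)]
  simp

lemma eint_mono {Y : Type*} [MeasurableSpace Y] (μ : Measure Y) {f g : Y → EReal}
    (h : ∀ y, f y ≤ g y) : eint μ f ≤ eint μ g := by
  unfold eint
  apply EReal.sub_le_sub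
  · exact_mod_cast lintegral_mono fun y => erealToENNReal_mono (h y)
  · exact_mod_cast lintegral_mono fun y => erealToENNReal_mono (by simpa using h y)

lemma eint_real {Y : Type*} [MeasurableSpace Y] (μ : Measure Y) [IsFiniteMeasure μ]
    (φ : Y → ℝ) (hφ : Measurable φ) (C : ℝ) (hC : ∀ y, |φ y| ≤ C) :
    eint μ (fun y => (φ y : EReal)) = ((∫ y, φ y ∂μ : ℝ) : EReal) := by
  have hint : Integrable φ μ := by
    refine ⟨hφ.aestronglyMeasurable, ?_⟩
    exact HasFiniteIntegral.of_bounded (C := C) (Filter.Eventually.of_forall fun y => by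
      simpa [Real.norm_eq_abs] using hC y)
  have hA : (∫⁻ y, erealToENNReal ((φ y : EReal)) ∂μ) = ∫⁻ y, ENNReal.ofReal (φ y) ∂μ := by
    simp [erealToENNReal_coe]
  have hB : (∫⁻ y, erealToENNReal (-(φ y : EReal)) ∂μ) = ∫⁻ y, ENNReal.ofReal (-φ y) ∂μ := by
    simp_rw [← EReal.coe_neg, erealToENNReal_coe]
  have hAfin : (∫⁻ y, ENNReal.ofReal (φ y) ∂μ) ≠ ⊤ := by
    refine ne_of_lt (lt_of_le_of_lt
      (lintegral_mono (g := fun _ => ENNReal.ofReal C) fun y =>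
        ENNReal.ofReal_le_ofReal (le_trans (le_abs_self _) (hC y))) ?_)
    rw [lintegral_const]
    exact ENNReal.mul_lt_top ENNReal.ofReal_lt_top (measure_lt_top μ _)
  have hBfin : (∫⁻ y, ENNReal.ofReal (-φ y) ∂μ) ≠ ⊤ := by
    refine ne_of_lt (lt_of_le_of_lt
      (lintegral_mono (g := fun _ => ENNReal.ofReal C) fun y =>
        ENNReal.ofReal_le_ofReal (le_trans (neg_le_abs _) (hC y))) ?_)
    rw [lintegral_const]
    exact ENNReal.mul_lt_top ENNReal.ofReal_lt_top (measure_lt_top μ _)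
  unfold eint
  rw [hA, hB, integral_eq_lintegral_pos_part_sub_lintegral_neg_part hint]
  have ha : 0 ≤ (∫⁻ y, ENNReal.ofReal (φ y) ∂μ).toReal := ENNReal.toReal_nonneg
  have hb : 0 ≤ (∫⁻ y, ENNReal.ofReal (-φ y) ∂μ).toReal := ENNReal.toReal_nonneg
  rw [← ENNReal.ofReal_toReal hAfin, ← ENNReal.ofReal_toReal hBfin]
  generalize (∫⁻ y, ENNReal.ofReal (φ y) ∂μ).toReal = a at *
  generalize (∫⁻ y, ENNReal.ofReal (-φ y) ∂μ).toReal = b at *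
  rw [EReal.coe_sub, EReal.coe_ennreal_ofReal, EReal.coe_ennreal_ofReal,
    max_eq_left ha, max_eq_left hb, ENNReal.toReal_ofReal ha, ENNReal.toReal_ofReal hb]

section Conj
variable {Y : Type*} {X : Type*} [NormedAddCommGroup X] [NormedSpace ℝ X]
  {Ψ : Y × X → EReal}

lemma partialConj_def (y : Y) (z : StrongDual ℝ X) :
    partialConj Ψ (y, z) = ⨆ v : X, ((z v : EReal) - Ψ (y, v)) := rfl

lemma le_partialConj (y : Y) (z : StrongDual ℝ X) (v : X) :
    ((z v : EReal) - Ψ (y, v)) ≤ partialConj Ψ (y, z) := by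
  rw [partialConj_def]; exact le_iSup (fun w => ((z w : EReal) - Ψ (y, w))) v

lemma partialConj_lower {K : ℝ} (y : Y) (z : StrongDual ℝ X) (hK : Ψ (y, 0) ≤ (K : EReal)) :
    ((-K : ℝ) : EReal) ≤ partialConj Ψ (y, z) := by
  refine le_trans ?_ (le_partialConj y z 0)
  have : ((-K : ℝ) : EReal) = ((0 : ℝ) : EReal) - (K : EReal) := by
    rw [← EReal.coe_sub]; norm_num
  rw [this]
  have h0 : ((z 0 : ℝ) : EReal) = ((0:ℝ) : EReal) := by rw [map_zero]
  rw [← h0]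
  exact EReal.sub_le_sub le_rfl hK

lemma partialConj_upper {G : X → EReal} (hGle : ∀ (y : Y) (v : X), G v ≤ Ψ (y, v))
    (y : Y) (z : StrongDual ℝ X) {c : ℝ}
    (hc : ∀ v, (((‖z‖ + 1) * ‖v‖ - c : ℝ) : EReal) ≤ G v) :
    partialConj Ψ (y, z) ≤ (c : EReal) := by
  rw [partialConj_def]
  refine iSup_le fun v => ?_
  have h1 : (((‖z‖ + 1) * ‖v‖ - c : ℝ) : EReal) ≤ Ψ (y, v) := le_trans (hc v) (hGle y v)
  calc ((z v : ℝ) : EReal) - Ψ (y, v)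
      ≤ ((z v : ℝ) : EReal) - (((‖z‖ + 1) * ‖v‖ - c : ℝ) : EReal) := EReal.sub_le_sub le_rfl h1
    _ = ((z v - ((‖z‖ + 1) * ‖v‖ - c) : ℝ) : EReal) := by norm_cast
    _ ≤ (c : EReal) := by
        rw [EReal.coe_le_coe_iff]
        have h2 : z v ≤ ‖z‖ * ‖v‖ := le_trans (le_abs_self _) (z.le_opNorm v)
        nlinarith [norm_nonneg v]

lemma fenchel_young (hbot : ∀ p, Ψ p ≠ ⊥) (y : Y) (z : StrongDual ℝ X) (v : X) {q : ℝ}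
    (hq : partialConj Ψ (y, z) ≤ (q : EReal)) :
    ((z v - q : ℝ) : EReal) ≤ Ψ (y, v) := by
  have h := le_trans (le_partialConj (Ψ := Ψ) y z v) hq
  rcases eq_or_ne (Ψ (y, v)) ⊤ with hT | hT
  · rw [hT]; exact le_top
  · rw [← EReal.coe_toReal hT (hbot (y, v))] at h ⊢
    rw [← EReal.coe_sub, EReal.coe_le_coe_iff] at h
    rw [EReal.coe_le_coe_iff]
    linarith

/-- Key biconjugation inequality via Hahn-Banach separation. -/
lemma biconj_aux (hbot : ∀ p, Ψ p ≠ ⊥) (y : Y)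
    (hproper : ∃ v, Ψ (y, v) ≠ ⊤)
    (hconv : ∀ (v w : X) (a b : ℝ), 0 ≤ a → 0 ≤ b → a + b = 1 →
      Ψ (y, a • v + b • w) ≤ (a : EReal) * Ψ (y, v) + (b : EReal) * Ψ (y, w))
    (hlsc : LowerSemicontinuous fun v : X => Ψ (y, v))
    {c₀ : ℝ} (hc₀ : ∀ v, (c₀ : EReal) ≤ Ψ (y, v))
    {K : ℝ} (hK : Ψ (y, 0) ≤ (K : EReal))
    (v₀ : X) (r : ℝ) (hr : (r : EReal) < Ψ (y, v₀)) :
    ∃ (z : StrongDual ℝ X) (q : ℝ), partialConj Ψ (y, z) ≤ (q : EReal) ∧ r < z v₀ - q := by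
  classical
  set epi : Set (X × ℝ) := {p | Ψ (y, p.1) ≤ (p.2 : EReal)} with hepi_def
  have hmemepi : ∀ (v : X) (t : ℝ), Ψ (y, v) ≤ (t : EReal) → (v, t) ∈ epi := fun v t h => h
  have hne_top : ∀ p : X × ℝ, p ∈ epi → Ψ (y, p.1) ≠ ⊤ := by
    intro p hp
    exact ne_top_of_le_ne_top (EReal.coe_ne_top p.2) hp
  have htoReal_le : ∀ p : X × ℝ, p ∈ epi → (Ψ (y, p.1)).toReal ≤ p.2 := by
    intro p hp
    have := EReal.toReal_le_toReal hp (hbot (y, p.1)) (EReal.coe_ne_top p.2)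
    rwa [EReal.toReal_coe] at this
  -- closedness
  have hepiC : IsClosed epi := by
    rw [← isOpen_compl_iff, isOpen_iff_mem_nhds]
    intro p hp
    have hp' : (p.2 : EReal) < Ψ (y, p.1) := not_le.mp hp
    obtain ⟨m, h1, h2⟩ := exists_between hp'
    have hm_top : m ≠ ⊤ := (lt_of_lt_of_le h2 le_top).ne
    have hm_bot : m ≠ ⊥ := (lt_of_le_of_lt bot_le h1).ne'
    set q : ℝ := m.toReal with hq_def
    have hmq : m = (q : EReal) := (EReal.coe_toReal hm_top hm_bot).symm
    rw [hmq] at h1 h2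
    have hev : ∀ᶠ v in 𝓝 p.1, (q : EReal) < Ψ (y, v) := hlsc p.1 _ h2
    have hq1 : p.2 < q := by exact_mod_cast h1
    rw [← @Prod.mk.eta _ _ p, nhds_prod_eq]
    refine mem_of_superset (Filter.prod_mem_prod hev (Iio_mem_nhds hq1)) ?_
    rintro ⟨v, t⟩ ⟨hv, ht⟩
    simp only [Set.mem_compl_iff, hepi_def, Set.mem_setOf_eq, not_le]
    exact lt_trans (by exact_mod_cast ht) hv
  -- convexity
  have hepiConv : Convex ℝ epi := by
    rintro p hp q hq a b ha hb hab
    have h := hconv p.1 q.1 a b ha hb hab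
    have hps := htoReal_le p hp
    have hqs := htoReal_le q hq
    have hpt := hne_top p hp
    have hqt := hne_top q hq
    show Ψ (y, (a • p + b • q).1) ≤ (((a • p + b • q).2 : ℝ) : EReal)
    have h1 : (a • p + b • q).1 = a • p.1 + b • q.1 := rfl
    have h2 : (a • p + b • q).2 = a * p.2 + b * q.2 := rfl
    rw [h1, h2]
    refine le_trans h ?_
    rw [← EReal.coe_toReal hpt (hbot (y, p.1)), ← EReal.coe_toReal hqt (hbot (y, q.1))]
    rw [← EReal.coe_mul, ← EReal.coe_mul, ← EReal.coe_add, EReal.coe_le_coe_iff]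
    have := mul_le_mul_of_nonneg_left hps ha
    have := mul_le_mul_of_nonneg_left hqs hb
    linarith
  have hmem : ((v₀, r) : X × ℝ) ∉ epi := by
    simp only [hepi_def, Set.mem_setOf_eq, not_le]
    exact hr
  obtain ⟨f, u, hfs, hfx⟩ := geometric_hahn_banach_closed_point hepiConv hepiC hmem
  set zt : StrongDual ℝ X := f.comp (ContinuousLinearMap.inl ℝ X ℝ) with hzt_def
  set a : ℝ := f (0, 1) with ha_def
  have hf_eq : ∀ p : X × ℝ, f p = zt p.1 + p.2 * a := by
    intro p
    have hsplit : p = ((p.1, 0) : X × ℝ) + (0, p.2) := by simp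
    have h2 : ((0 : X), p.2) = p.2 • ((0 : X), (1 : ℝ)) := by simp
    have e1 : zt p.1 = f (p.1, 0) := rfl
    rw [e1, ha_def]
    calc f p = f ((p.1, 0) + ((0 : X), p.2)) := by rw [← hsplit]
      _ = f (p.1, 0) + f ((0 : X), p.2) := map_add f _ _
      _ = f (p.1, 0) + p.2 * f (0, 1) := by rw [h2, ContinuousLinearMap.map_smul, smul_eq_mul]
  -- a ≤ 0
  have hA : a ≤ 0 := by
    by_contra h
    push_neg at h
    set t : ℝ := max K ((u - zt 0) / a + 1) with ht_def
    have hmem0 : ((0 : X), t) ∈ epi :=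
      hmemepi 0 t (le_trans hK (EReal.coe_le_coe_iff.mpr (le_max_left _ _)))
    have hlt := hfs _ hmem0
    rw [hf_eq] at hlt
    have h2 : (u - zt 0) / a + 1 ≤ t := le_max_right _ _
    have h3 : (u - zt 0) + a ≤ t * a := by
      have := mul_le_mul_of_nonneg_right h2 (le_of_lt h)
      calc (u - zt 0) + a = ((u - zt 0)/a + 1) * a := by field_simp
        _ ≤ t * a := this
    simp only at hlt
    linarith
  rcases lt_or_eq_of_le hA with hlt | heq
  · -- a < 0
    have hαpos : 0 < -a := by linarith
    have hna : -a ≠ 0 := ne_of_gt hαpos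
    refine ⟨(-a)⁻¹ • zt, u / (-a), ?_, ?_⟩
    · rw [partialConj_def]
      refine iSup_le fun v => ?_
      rcases eq_or_ne (Ψ (y, v)) ⊤ with hT | hT
      · rw [hT, EReal.sub_top]; exact bot_le
      · have hvt : (v, (Ψ (y, v)).toReal) ∈ epi :=
          hmemepi _ _ (le_of_eq (EReal.coe_toReal hT (hbot (y, v))).symm)
        have hlt2 : zt v + (Ψ (y, v)).toReal * a < u := by simpa [hf_eq] using hfs _ hvt
        have happ : ((((-a)⁻¹ • zt : StrongDual ℝ X)) v : ℝ) = (-a)⁻¹ * zt v := rfl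
        rw [← EReal.coe_toReal hT (hbot (y, v)), ← EReal.coe_sub, EReal.coe_le_coe_iff, happ]
        set t := (Ψ (y, v)).toReal with ht_def
        rw [div_eq_inv_mul]
        have h2 : (-a)⁻¹ * (zt v + t * a) ≤ (-a)⁻¹ * u :=
          mul_le_mul_of_nonneg_left (le_of_lt hlt2) (le_of_lt (inv_pos.mpr hαpos))
        have h3 : (-a)⁻¹ * (zt v + t * a) = (-a)⁻¹ * zt v - t := by
          field_simp
          rw [add_div, mul_div_cancel_left₀ _ (show a ≠ 0 by linarith)]
          ring
        linarith
    · have hx : u < zt v₀ + r * a := by simpa [hf_eq] using hfx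
      have happ : ((((-a)⁻¹ • zt : StrongDual ℝ X)) v₀ : ℝ) = (-a)⁻¹ * zt v₀ := rfl
      rw [happ, div_eq_inv_mul]
      have h2 : (-a)⁻¹ * u < (-a)⁻¹ * (zt v₀ + r * a) :=
        mul_lt_mul_of_pos_left hx (inv_pos.mpr hαpos)
      have h3 : (-a)⁻¹ * (zt v₀ + r * a) = (-a)⁻¹ * zt v₀ - r := by
        field_simp
        rw [add_div, mul_div_cancel_left₀ _ (show a ≠ 0 by linarith)]
        ring
      linarith
  · -- a = 0
    obtain ⟨v₁, hv₁⟩ := hproper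
    have hu1 : zt v₁ < u := by
      have hvt : (v₁, (Ψ (y, v₁)).toReal) ∈ epi :=
        hmemepi _ _ (le_of_eq (EReal.coe_toReal hv₁ (hbot (y, v₁))).symm)
      simpa [hf_eq, heq] using hfs _ hvt
    have hu2 : u < zt v₀ := by simpa [hf_eq, heq] using hfx
    have hpos : 0 < zt v₀ - u := by linarith
    obtain ⟨n, hn⟩ := exists_nat_gt ((r - c₀) / (zt v₀ - u))
    refine ⟨(n : ℝ) • zt, n * u - c₀, ?_, ?_⟩
    · rw [partialConj_def]
      refine iSup_le fun v => ?_
      rcases eq_or_ne (Ψ (y, v)) ⊤ with hT | hT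
      · rw [hT, EReal.sub_top]; exact bot_le
      · have hvt : (v, (Ψ (y, v)).toReal) ∈ epi :=
          hmemepi _ _ (le_of_eq (EReal.coe_toReal hT (hbot (y, v))).symm)
        have hlt2 : zt v < u := by simpa [hf_eq, heq] using hfs _ hvt
        have hc0t : c₀ ≤ (Ψ (y, v)).toReal := by
          have := EReal.toReal_le_toReal (hc₀ v) (EReal.coe_ne_bot c₀) hT
          rwa [EReal.toReal_coe] at this
        have happ : ((((n : ℝ) • zt : StrongDual ℝ X)) v : ℝ) = n * zt v := rfl
        rw [← EReal.coe_toReal hT (hbot (y, v)), ← EReal.coe_sub, EReal.coe_le_coe_iff, happ]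
        have : (n : ℝ) * zt v ≤ n * u :=
          mul_le_mul_of_nonneg_left (le_of_lt hlt2) (Nat.cast_nonneg n)
        linarith
    · have happ : ((((n : ℝ) • zt : StrongDual ℝ X)) v₀ : ℝ) = n * zt v₀ := rfl
      rw [happ]
      have : (r - c₀) < n * (zt v₀ - u) := by
        rw [div_lt_iff₀ hpos] at hn
        linarith
      nlinarith
end Conj

lemma isSeparable_span {E : Type*} [NormedAddCommGroup E] [NormedSpace ℝ E]
    {s : Set E} (hs : s.Countable) :
    TopologicalSpace.IsSeparable ((Submodule.span ℝ s : Submodule ℝ E) : Set E) := by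
  rcases s.eq_empty_or_nonempty with rfl | hne
  · rw [Submodule.span_empty]
    exact (Set.countable_singleton 0).isSeparable.mono (by simp)
  · obtain ⟨φ, rfl⟩ := Set.Countable.exists_eq_range hs hne
    set g : (n : ℕ) → (Fin n → ℝ) → E := fun n c => ∑ i : Fin n, c i • φ i with hg
    have hsub : ((Submodule.span ℝ (Set.range φ) : Submodule ℝ E) : Set E)
        ⊆ ⋃ n : ℕ, g n '' Set.univ := by
      intro x hx
      rw [SetLike.mem_coe, Finsupp.mem_span_range_iff_exists_finsupp] at hx
      obtain ⟨c, hc⟩ := hx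
      rcases c.support.eq_empty_or_nonempty with hemp | hnemp
      · have : x = 0 := by
          rw [← hc, Finsupp.sum, hemp]; simp
        refine Set.mem_iUnion.mpr ⟨0, ⟨(fun i => 0), Set.mem_univ _, by simp [hg, this]⟩⟩
      · set n := c.support.max' hnemp + 1 with hn
        have hss : c.support ⊆ Finset.range n := by
          intro i hi
          rw [Finset.mem_range, hn]
          exact Nat.lt_succ_of_le (c.support.le_max' i hi)
        refine Set.mem_iUnion.mpr ⟨n, ⟨(fun i => c i), Set.mem_univ _, ?_⟩⟩
        have h1 : (Finsupp.sum c fun i a => a • φ i) = ∑ i ∈ Finset.range n, c i • φ i :=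
          Finsupp.sum_of_support_subset c hss _ (fun i _ => by simp)
        rw [hg]
        simp only []
        rw [Fin.sum_univ_eq_sum_range (fun i => c i • φ i) n, ← h1, hc]
    refine TopologicalSpace.IsSeparable.mono ?_ hsub
    refine TopologicalSpace.IsSeparable.iUnion fun n => ?_
    refine TopologicalSpace.IsSeparable.image ?_ ?_
    · exact TopologicalSpace.isSeparable_univ_iff.mpr inferInstance
    · exact continuous_finset_sum _ fun i _ => (continuous_apply (i : Fin n)).smul continuous_const

/-- If the dual of a normed space is separable, so is the space. -/
lemma separable_of_dual_separable {E : Type*} [NormedAddCommGroup E] [NormedSpace ℝ E]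
    [TopologicalSpace.SeparableSpace (StrongDual ℝ E)] :
    TopologicalSpace.SeparableSpace E := by
  obtain ⟨S, hSc, hSd⟩ := TopologicalSpace.exists_countable_dense (StrongDual ℝ E)
  have hex : ∀ g : StrongDual ℝ E, ∃ xx : E, ‖xx‖ ≤ 1 ∧ ‖g‖ / 2 ≤ ‖g xx‖ := by
    intro g
    rcases eq_or_ne g 0 with rfl | hg
    · exact ⟨0, by simp⟩
    · have hpos : 0 < ‖g‖ := norm_pos_iff.mpr hg
      obtain ⟨x, hx1, hx2⟩ := g.exists_lt_apply_of_lt_opNorm (show ‖g‖/2 < ‖g‖ by linarith)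
      exact ⟨x, le_of_lt hx1, le_of_lt hx2⟩
  choose xx hxx1 hxx2 using hex
  set N : Submodule ℝ E := (Submodule.span ℝ (xx '' S)).topologicalClosure with hN
  have hNsep : TopologicalSpace.IsSeparable (N : Set E) := by
    rw [hN, Submodule.topologicalClosure_coe]
    exact TopologicalSpace.isSeparable_closure.mpr (isSeparable_span (hSc.image xx))
  by_cases hV : (N : Set E) = Set.univ
  · rw [hV] at hNsep
    exact TopologicalSpace.isSeparable_univ_iff.mp hNsep
  · exfalso
    obtain ⟨e, he⟩ := (Set.ne_univ_iff_exists_notMem _).mp hV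
    have hNconv : Convex ℝ (N : Set E) := N.convex
    have hNclosed : IsClosed (N : Set E) := by
      rw [hN, Submodule.topologicalClosure_coe]; exact isClosed_closure
    obtain ⟨g, u, hgs, hge⟩ := geometric_hahn_banach_closed_point hNconv hNclosed he
    have hg0 : ∀ x ∈ N, g x = 0 := by
      intro x hx
      by_contra hgx
      have hmem : ((|u| + 1) / g x) • x ∈ N := N.smul_mem _ hx
      have := hgs _ hmem
      simp only [ContinuousLinearMap.map_smul, smul_eq_mul] at this
      rw [div_mul_cancel₀ _ hgx] at this
      linarith [le_abs_self u]
    have hupos : 0 < u := by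
      have := hgs 0 N.zero_mem
      simpa using this
    have hgne : g ≠ 0 := by
      intro h
      have : u < 0 := by simpa [h] using hge
      linarith
    have hgpos : 0 < ‖g‖ := norm_pos_iff.mpr hgne
    obtain ⟨gn, hgnS, hgn⟩ := hSd.exists_dist_lt g (show 0 < ‖g‖/8 by linarith)
    have h0 : g (xx gn) = 0 :=
      hg0 _ ((Submodule.le_topologicalClosure _)
        (Submodule.subset_span (Set.mem_image_of_mem xx hgnS)))
    have h1 : ‖gn‖ / 2 ≤ ‖gn (xx gn)‖ := hxx2 gn
    have h2 : ‖gn (xx gn)‖ = ‖(gn - g) (xx gn)‖ := by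
      rw [ContinuousLinearMap.sub_apply, h0, sub_zero]
    have h3 : ‖(gn - g) (xx gn)‖ ≤ ‖gn - g‖ := by
      calc ‖(gn - g) (xx gn)‖ ≤ ‖gn - g‖ * ‖xx gn‖ := (gn - g).le_opNorm _
        _ ≤ ‖gn - g‖ * 1 := mul_le_mul_of_nonneg_left (hxx1 gn) (norm_nonneg _)
        _ = ‖gn - g‖ := mul_one _
    have h4 : ‖gn - g‖ < ‖g‖ / 8 := by
      rw [norm_sub_rev]
      rwa [dist_eq_norm] at hgn
    have h5 : ‖g‖ - ‖gn‖ ≤ ‖g - gn‖ := norm_sub_norm_le _ _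
    have h6 : ‖gn - g‖ = ‖g - gn‖ := norm_sub_rev _ _
    linarith

section Weak
variable {X : Type*} [NormedAddCommGroup X] [NormedSpace ℝ X]

lemma norming_le (zs : ℕ → StrongDual ℝ X) (hzs : DenseRange zs) (u : X) (r : ℝ) (hr : 0 ≤ r)
    (h : ∀ k, |zs k u| ≤ r * ‖zs k‖) : ‖u‖ ≤ r := by
  by_contra hcon
  push_neg at hcon
  have hu0 : u ≠ 0 := by
    intro h0
    rw [h0, norm_zero] at hcon
    linarith
  have hupos : 0 < ‖u‖ := norm_pos_iff.mpr hu0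
  obtain ⟨g, hg1, hg2⟩ := exists_dual_vector ℝ u (norm_ne_zero_iff.mpr hu0)
  have hg2' : g u = ‖u‖ := by exact_mod_cast hg2
  set ε : ℝ := (‖u‖ - r) / (2 * (‖u‖ + r + 1)) with hε_def
  have hεpos : 0 < ε := by
    apply div_pos (by linarith)
    nlinarith
  obtain ⟨k, hk⟩ := Metric.denseRange_iff.mp hzs g ε hεpos
  have hdk : ‖g - zs k‖ < ε := by rwa [dist_eq_norm] at hk
  have h1 : |(g - zs k) u| ≤ ε * ‖u‖ := by
    refine le_trans ((g - zs k).le_opNorm u) ?_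
    exact mul_le_mul_of_nonneg_right (le_of_lt hdk) (norm_nonneg u)
  have h3 : ‖zs k‖ ≤ 1 + ε := by
    have h5 := norm_sub_norm_le (zs k) g
    have h6 : ‖zs k - g‖ = ‖g - zs k‖ := norm_sub_rev _ _
    rw [hg1] at h5
    linarith
  have hsplit : ‖u‖ ≤ |(g - zs k) u| + |zs k u| := by
    have he : g u = (g - zs k) u + zs k u := by
      have : (g - zs k) u = g u - zs k u := rfl
      rw [this]; ring
    rw [← hg2', he]
    exact le_trans (le_abs_self _) (abs_add_le _ _)
  have h4 : |zs k u| ≤ r * (1 + ε) := le_trans (h k) (mul_le_mul_of_nonneg_left h3 hr)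
  have hkey : ε * (‖u‖ + r) ≤ (‖u‖ - r) / 2 := by
    rw [hε_def, div_mul_eq_mul_div, div_le_div_iff₀ (by nlinarith) (by norm_num)]
    nlinarith
  nlinarith

lemma weak_limit_exists
    (hrefl : Function.Surjective (NormedSpace.inclusionInDoubleDual ℝ X))
    (zs : ℕ → StrongDual ℝ X) (hzs : DenseRange zs)
    {R : ℝ} (hR : 0 ≤ R) (v : ℕ → X) (hv : ∀ n, ‖v n‖ ≤ R)
    (β : ℕ → ℝ) (hβ : ∀ k, Tendsto (fun n => zs k (v n)) atTop (𝓝 (β k))) :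
    ∃ w : X, ‖w‖ ≤ R ∧ ∀ z : StrongDual ℝ X, Tendsto (fun n => z (v n)) atTop (𝓝 (z w)) := by
  have hcau : ∀ z : StrongDual ℝ X, CauchySeq fun n => z (v n) := by
    intro z
    rw [Metric.cauchySeq_iff]
    intro ε hε
    obtain ⟨k, hk⟩ := Metric.denseRange_iff.mp hzs z (ε / (4 * (R + 1)))
      (by positivity)
    have hdk : ‖z - zs k‖ < ε / (4 * (R + 1)) := by rwa [dist_eq_norm] at hk
    have hc := (hβ k).cauchySeq
    rw [Metric.cauchySeq_iff] at hc
    obtain ⟨N, hN⟩ := hc (ε / 2) (by positivity)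
    refine ⟨N, fun m hm n hn => ?_⟩
    have hclose : ∀ j, |z (v j) - zs k (v j)| ≤ ε / 4 := by
      intro j
      have h1 : |(z - zs k) (v j)| ≤ ‖z - zs k‖ * ‖v j‖ := (z - zs k).le_opNorm (v j)
      have h2 : ‖z - zs k‖ * ‖v j‖ ≤ (ε / (4 * (R + 1))) * R := by
        apply mul_le_mul (le_of_lt hdk) (hv j) (norm_nonneg _) (by positivity)
      have h3 : (ε / (4 * (R + 1))) * R ≤ ε / 4 := by
        rw [div_mul_eq_mul_div, div_le_div_iff₀ (by positivity) (by norm_num)]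
        nlinarith
      have : (z - zs k) (v j) = z (v j) - zs k (v j) := rfl
      rw [this] at h1
      linarith
    have hmid := hN m hm n hn
    rw [Real.dist_eq] at hmid ⊢
    have e1 := hclose m
    have e2 := hclose n
    have : z (v m) - z (v n) = (z (v m) - zs k (v m)) + (zs k (v m) - zs k (v n))
        + (zs k (v n) - z (v n)) := by ring
    rw [this]
    calc |_ + _ + _| ≤ |z (v m) - zs k (v m)| + |zs k (v m) - zs k (v n)|
          + |zs k (v n) - z (v n)| := by
            exact le_trans (abs_add_le _ _) (by linarith [abs_add_le (z (v m) - zs k (v m)) (zs k (v m) - zs k (v n)), abs_add_le ((z (v m) - zs k (v m)) + (zs k (v m) - zs k (v n))) (zs k (v n) - z (v n))])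
      _ < ε := by
          rw [abs_sub_comm (zs k (v n)) (z (v n))]
          linarith
  have hlim : ∀ z : StrongDual ℝ X, ∃ l : ℝ, Tendsto (fun n => z (v n)) atTop (𝓝 l) :=
    fun z => cauchySeq_tendsto_of_complete (hcau z)
  choose L hL using hlim
  have hadd : ∀ z z' : StrongDual ℝ X, L (z + z') = L z + L z' := by
    intro z z'
    refine tendsto_nhds_unique (hL (z + z')) ?_
    have := (hL z).add (hL z')
    simpa [ContinuousLinearMap.add_apply] using this
  have hsmul : ∀ (a : ℝ) (z : StrongDual ℝ X), L (a • z) = a * L z := by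
    intro a z
    refine tendsto_nhds_unique (hL (a • z)) ?_
    have := (hL z).const_mul a
    simpa [ContinuousLinearMap.smul_apply, smul_eq_mul] using this
  have hbdd : ∀ z : StrongDual ℝ X, |L z| ≤ R * ‖z‖ := by
    intro z
    have habs : Tendsto (fun n => |z (v n)|) atTop (𝓝 |L z|) := (hL z).abs
    refine le_of_tendsto habs (Filter.Eventually.of_forall fun n => ?_)
    calc |z (v n)| ≤ ‖z‖ * ‖v n‖ := z.le_opNorm (v n)
      _ ≤ ‖z‖ * R := mul_le_mul_of_nonneg_left (hv n) (norm_nonneg z)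
      _ = R * ‖z‖ := mul_comm _ _
  set Lm : StrongDual ℝ X →ₗ[ℝ] ℝ :=
    { toFun := L, map_add' := hadd, map_smul' := fun a z => by simp [hsmul a z] } with hLm
  set Φ : StrongDual ℝ X →L[ℝ] ℝ := Lm.mkContinuous R (fun z => by
    rw [Real.norm_eq_abs]
    exact hbdd z) with hΦ
  obtain ⟨w, hw⟩ := hrefl Φ
  have happ : ∀ z : StrongDual ℝ X, z w = L z := by
    intro z
    have h1 : inclusionInDoubleDual ℝ X w z = Φ z := by rw [hw]
    rw [NormedSpace.dual_def] at h1
    rw [h1]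
    rfl
  have hwR : ‖w‖ ≤ R := by
    by_contra hcon
    push_neg at hcon
    have hw0 : w ≠ 0 := by
      intro h0
      rw [h0, norm_zero] at hcon
      linarith
    obtain ⟨g, hg1, hg2⟩ := exists_dual_vector ℝ w (norm_ne_zero_iff.mpr hw0)
    have hg2' : g w = ‖w‖ := by exact_mod_cast hg2
    have := hbdd g
    rw [← happ g, hg2', hg1, mul_one, abs_of_nonneg (norm_nonneg w)] at this
    linarith
  exact ⟨w, hwR, fun z => (happ z) ▸ hL z⟩
end Weak

/-- Measurable selection for a closed subset of `Y × H` with `H` compact metric. -/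
lemma exists_measurable_selection_of_closed
    {Y : Type*} [TopologicalSpace Y] [PolishSpace Y] [MeasurableSpace Y] [BorelSpace Y]
    {H : Type*} [TopologicalSpace H] [PolishSpace H] [CompactSpace H] [Nonempty H]
    [MeasurableSpace H] [BorelSpace H]
    {W : Set (Y × H)} (hW : IsClosed W) :
    ∃ σ : Y → H, Measurable σ ∧ ∀ y : Y, (∃ h, (y, h) ∈ W) → (y, σ y) ∈ W := by
  classical
  letI := TopologicalSpace.upgradeIsCompletelyMetrizable Y
  letI := TopologicalSpace.upgradeIsCompletelyMetrizable H
  obtain ⟨b, hb⟩ := TopologicalSpace.exists_dense_seq H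
  set Ball : List ℕ → Set H :=
    fun l => ⋂ i ∈ Finset.range l.length, Metric.closedBall (b (l.getD i 0)) ((2⁻¹ : ℝ) ^ i)
    with hBall_def
  have hBallClosed : ∀ l, IsClosed (Ball l) := fun l =>
    isClosed_biInter fun i _ => Metric.isClosed_closedBall
  have hBall_nil : Ball [] = Set.univ := by simp [hBall_def]
  have hBall_append : ∀ (l : List ℕ) (m : ℕ),
      Ball (l ++ [m]) = Ball l ∩ Metric.closedBall (b m) ((2⁻¹ : ℝ) ^ l.length) := by
    intro l m
    ext x
    simp only [hBall_def, Set.mem_iInter, Finset.mem_range, List.length_append,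
      List.length_singleton, Set.mem_inter_iff]
    constructor
    · intro hx
      refine ⟨fun i hi => ?_, ?_⟩
      · have := hx i (by omega)
        rwa [List.getD_append _ _ _ _ hi] at this
      · have := hx l.length (by omega)
        rwa [List.getD_append_right _ _ _ _ (le_refl _), Nat.sub_self] at this
    · rintro ⟨h1, h2⟩ i hi
      rcases lt_or_ge i l.length with hil | hil
      · rw [List.getD_append _ _ _ _ hil]
        exact h1 i hil
      · have hieq : i = l.length := by omega
        rw [List.getD_append_right _ _ _ _ hil, hieq, Nat.sub_self]
        simpa [hieq] using h2
  set Hit : List ℕ → Set Y := fun l => {y | ∃ h ∈ Ball l, (y, h) ∈ W} with hHit_def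
  have hHitClosed : ∀ l, IsClosed (Hit l) := by
    intro l
    refine IsSeqClosed.isClosed ?_
    intro ys y hys hlim
    choose hs hh1 hh2 using hys
    obtain ⟨h, -, φ, hφmono, hφlim⟩ :=
      (isCompact_univ (X := H)).tendsto_subseq (fun n => Set.mem_univ (hs n))
    have hlimp : Tendsto (fun n => (ys (φ n), hs (φ n))) atTop (𝓝 (y, h)) :=
      ((hlim.comp hφmono.tendsto_atTop)).prodMk_nhds hφlim
    have hmW : (y, h) ∈ W :=
      hW.mem_of_tendsto hlimp (Filter.Eventually.of_forall fun n => hh2 (φ n))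
    have hhB : h ∈ Ball l :=
      (hBallClosed l).mem_of_tendsto hφlim (Filter.Eventually.of_forall fun n => hh1 (φ n))
    exact ⟨h, hhB, hmW⟩
  -- step existence
  have hstep : ∀ (y : Y) (l : List ℕ), y ∈ Hit l → ∃ m, y ∈ Hit (l ++ [m]) := by
    intro y l hy
    obtain ⟨h, hhB, hhW⟩ := hy
    obtain ⟨m, hm⟩ := Metric.denseRange_iff.mp hb h ((2⁻¹ : ℝ) ^ l.length) (by positivity)
    refine ⟨m, ⟨h, ?_, hhW⟩⟩
    rw [hBall_append]
    exact ⟨hhB, by rw [Metric.mem_closedBall]; exact le_of_lt hm⟩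
  -- the recursion
  set chL : List ℕ → Y → ℕ :=
    fun l y => if h : ∃ k, y ∈ Hit (l ++ [k]) then Nat.find h else 0 with hchL_def
  set pre : ℕ → Y → List ℕ := fun j => Nat.rec (motive := fun _ => Y → List ℕ)
    (fun _ => ([] : List ℕ)) (fun _ ih y => ih y ++ [chL (ih y) y]) j with hpre_def
  have hpre0 : ∀ y, pre 0 y = [] := fun _ => rfl
  have hpreS : ∀ j y, pre (j + 1) y = pre j y ++ [chL (pre j y) y] := fun _ _ => rfl
  have hlen : ∀ j y, (pre j y).length = j := by
    intro j y
    induction j with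
    | zero => simp [hpre0]
    | succ j ih => rw [hpreS]; simp [ih]
  -- invariant
  have hInv : ∀ y, y ∈ Hit [] → ∀ j, y ∈ Hit (pre j y) := by
    intro y hy j
    induction j with
    | zero => rw [hpre0]; exact hy
    | succ j ih =>
      obtain ⟨m, hm⟩ := hstep y (pre j y) ih
      rw [hpreS]
      have hex : ∃ k, y ∈ Hit (pre j y ++ [k]) := ⟨m, hm⟩
      have hch : chL (pre j y) y = Nat.find hex := by
        simp only [hchL_def]
        exact dif_pos hex
      rw [hch]
      exact Nat.find_spec hex
  -- Ball monotonicity along pre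
  have hBallMono : ∀ y j j', j ≤ j' → Ball (pre j' y) ⊆ Ball (pre j y) := by
    intro y j j' hjj
    induction j' with
    | zero => rw [Nat.le_zero.mp hjj]
    | succ j' ih =>
      rcases Nat.lt_or_ge j (j' + 1) with hlt | hge
      · refine subset_trans ?_ (ih (by omega))
        rw [hpreS, hBall_append]
        exact Set.inter_subset_left
      · have : j = j' + 1 := by omega
        rw [this]
  set pt : ℕ → Y → H := fun j y => b (chL (pre j y) y) with hpt_def
  -- near point property
  have hq : ∀ y, y ∈ Hit [] → ∀ j, ∃ h, h ∈ Ball (pre (j+1) y) ∧ (y, h) ∈ W ∧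
      dist (pt j y) h ≤ (2⁻¹ : ℝ) ^ j := by
    intro y hy j
    obtain ⟨h, hhB, hhW⟩ := hInv y hy (j+1)
    refine ⟨h, hhB, hhW, ?_⟩
    have := hhB
    rw [hpreS, hBall_append, hlen] at this
    rw [dist_comm]
    exact this.2
  have hdistpt : ∀ y, y ∈ Hit [] → ∀ j, dist (pt j y) (pt (j+1) y) ≤ 2 * (2⁻¹ : ℝ) ^ j := by
    intro y hy j
    obtain ⟨h, hhB, hhW, hd⟩ := hq y hy (j+1)
    have hd0 : dist (pt j y) h ≤ (2⁻¹ : ℝ) ^ j := by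
      have hhB' : h ∈ Ball (pre (j+1) y) := hBallMono y (j+1) (j+2) (by omega) hhB
      rw [hpreS, hBall_append, hlen] at hhB'
      rw [dist_comm]
      exact hhB'.2
    calc dist (pt j y) (pt (j+1) y) ≤ dist (pt j y) h + dist h (pt (j+1) y) := dist_triangle _ _ _
      _ ≤ (2⁻¹:ℝ)^j + (2⁻¹:ℝ)^(j+1) := by
          rw [dist_comm h]
          exact add_le_add hd0 hd
      _ ≤ 2 * (2⁻¹:ℝ)^j := by
          rw [pow_succ]
          nlinarith [pow_pos (show (0:ℝ) < 2⁻¹ by norm_num) j]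
  set pt' : ℕ → Y → H := fun j y => if y ∈ Hit [] then pt j y else Classical.arbitrary H
    with hpt'_def
  -- measurability of level sets of pre
  have hchLMeas : ∀ l m, MeasurableSet {y | chL l y = m} := by
    intro l m
    have heq : {y | chL l y = m} =
        ((⋃ k, Hit (l ++ [k])) ∩ (Hit (l ++ [m]) ∩ ⋂ k < m, (Hit (l ++ [k]))ᶜ)) ∪
        ((⋃ k, Hit (l ++ [k]))ᶜ ∩ {y | (0 : ℕ) = m}) := by
      ext y
      simp only [Set.mem_setOf_eq, Set.mem_union, Set.mem_inter_iff, Set.mem_iUnion,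
        Set.mem_compl_iff, Set.mem_iInter, hchL_def]
      by_cases hex : ∃ k, y ∈ Hit (l ++ [k])
      · rw [dif_pos hex]
        constructor
        · intro hfind
          subst hfind
          exact Or.inl ⟨hex, Nat.find_spec hex, fun k hk => Nat.find_min hex hk⟩
        · rintro (⟨-, hm1, hm2⟩ | ⟨hne, -⟩)
          · exact (Nat.find_eq_iff hex).mpr ⟨hm1, fun k hk => hm2 k hk⟩
          · exact absurd hex hne
      · rw [dif_neg hex]
        constructor
        · intro h0; exact Or.inr ⟨hex, h0⟩
        · rintro (⟨hex', -⟩ | ⟨-, h0⟩)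
          · exact absurd hex' hex
          · exact h0
    rw [heq]
    have hM : ∀ l', MeasurableSet (Hit l') := fun l' => (hHitClosed l').measurableSet
    refine MeasurableSet.union ?_ ?_
    · exact (MeasurableSet.iUnion fun k => hM _).inter
        ((hM _).inter (MeasurableSet.iInter fun k => MeasurableSet.iInter fun _ => (hM _).compl))
    · refine (MeasurableSet.iUnion fun k => hM _).compl.inter ?_
      by_cases h0 : (0 : ℕ) = m <;> simp [h0]
  have hpreMeas : ∀ j l, MeasurableSet {y | pre j y = l} := by
    intro j
    induction j with
    | zero =>
      intro l
      rcases List.eq_nil_or_concat l with rfl | ⟨l', m, rfl⟩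
      · simp only [hpre0]; simp
      · simp only [List.concat_eq_append]
        have : {y | pre 0 y = l' ++ [m]} = ∅ := by
          ext y; simp only [hpre0, Set.mem_setOf_eq, Set.mem_empty_iff_false, iff_false]
          intro h
          exact absurd (congrArg List.length h) (by simp)
        rw [this]; exact MeasurableSet.empty
    | succ j ih =>
      intro l
      rcases List.eq_nil_or_concat l with rfl | ⟨l', m, rfl⟩
      · have : {y | pre (j+1) y = []} = ∅ := by
          ext y; simp only [hpreS, Set.mem_setOf_eq, Set.mem_empty_iff_false, iff_false]
          intro h
          exact absurd (congrArg List.length h) (by simp)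
        rw [this]; exact MeasurableSet.empty
      · simp only [List.concat_eq_append]
        have heq : {y | pre (j+1) y = l' ++ [m]} = {y | pre j y = l'} ∩ {y | chL l' y = m} := by
          ext y
          simp only [hpreS, Set.mem_setOf_eq, Set.mem_inter_iff]
          constructor
          · intro h
            obtain ⟨h1, h2⟩ := List.append_inj' h rfl
            have h2' : chL (pre j y) y = m := by simpa using h2
            rw [h1] at h2'
            exact ⟨h1, h2'⟩
          · rintro ⟨h1, h2⟩
            rw [h1, h2]
        rw [heq]
        exact (ih l').inter (hchLMeas l' m)
  have hchMeas : ∀ j, Measurable fun y => chL (pre j y) y := by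
    intro j
    have hms : ∀ m, MeasurableSet {y | chL (pre j y) y = m} := by
      intro m
      have heq2 : {y | chL (pre j y) y = m}
          = ⋃ l : List ℕ, ({y | pre j y = l} ∩ {y | chL l y = m}) := by
        ext y
        simp only [Set.mem_setOf_eq, Set.mem_iUnion, Set.mem_inter_iff]
        constructor
        · intro h; exact ⟨pre j y, rfl, h⟩
        · rintro ⟨l, h1, h2⟩; rw [h1]; exact h2
      rw [heq2]
      exact MeasurableSet.iUnion fun l => (hpreMeas j l).inter (hchLMeas l m)
    exact measurable_to_countable' fun m => hms m
  have hpt'Meas : ∀ j, Measurable (pt' j) := by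
    intro j
    refine Measurable.ite (hHitClosed []).measurableSet ?_ measurable_const
    exact measurable_from_top.comp (hchMeas j)
  haveI : CompleteSpace H := complete_of_compact
  have hconv : ∀ y, ∃ h : H, Tendsto (fun j => pt' j y) atTop (𝓝 h) := by
    intro y
    by_cases hy : y ∈ Hit []
    · have hcs : CauchySeq (fun j => pt' j y) := by
        apply cauchySeq_of_le_geometric 2⁻¹ 2 (by norm_num)
        intro n
        simp only [hpt'_def, if_pos hy]
        exact hdistpt y hy n
      exact cauchySeq_tendsto_of_complete hcs
    · exact ⟨Classical.arbitrary H, by simp only [hpt'_def, if_neg hy]; exact tendsto_const_nhds⟩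
  choose σ hσ using hconv
  have hσMeas : Measurable σ :=
    measurable_of_tendsto_metrizable' atTop hpt'Meas (tendsto_pi_nhds.mpr hσ)
  refine ⟨σ, hσMeas, ?_⟩
  intro y hy
  have hyH : y ∈ Hit [] := by
    obtain ⟨h, hh⟩ := hy
    exact ⟨h, by rw [hBall_nil]; exact Set.mem_univ h, hh⟩
  choose q hq1 hq2 hq3 using hq y hyH
  have hptlim : Tendsto (fun j => pt j y) atTop (𝓝 (σ y)) := by
    have h1 := hσ y
    simp only [hpt'_def, if_pos hyH] at h1
    exact h1
  have hqlim : Tendsto (fun j => q j) atTop (𝓝 (σ y)) := by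
    rw [tendsto_iff_dist_tendsto_zero]
    have hb1 : ∀ j, dist (q j) (σ y) ≤ (2⁻¹:ℝ)^j + dist (pt j y) (σ y) := by
      intro j
      calc dist (q j) (σ y) ≤ dist (q j) (pt j y) + dist (pt j y) (σ y) := dist_triangle _ _ _
        _ ≤ _ := by rw [dist_comm (q j)]; exact add_le_add (hq3 j) le_rfl
    have h0 : Tendsto (fun j => (2⁻¹:ℝ)^j + dist (pt j y) (σ y)) atTop (𝓝 0) := by
      have hp := tendsto_pow_atTop_nhds_zero_of_lt_one (by norm_num : (0:ℝ) ≤ 2⁻¹)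
        (by norm_num : (2⁻¹:ℝ) < 1)
      have hd := tendsto_iff_dist_tendsto_zero.mp hptlim
      simpa using hp.add hd
    exact squeeze_zero (fun j => dist_nonneg) hb1 h0
  exact hW.mem_of_tendsto (tendsto_const_nhds.prodMk_nhds hqlim)
    (Filter.Eventually.of_forall hq2)

section Level
variable {Y : Type*} [TopologicalSpace Y] [PolishSpace Y] [MeasurableSpace Y] [BorelSpace Y]
variable {X : Type*} [NormedAddCommGroup X] [NormedSpace ℝ X]
  [TopologicalSpace.SeparableSpace X] [MeasurableSpace X] [BorelSpace X]

lemma level_selection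
    (hrefl : Function.Surjective (NormedSpace.inclusionInDoubleDual ℝ X))
    (Ψ : Y × X → EReal) (hbot : ∀ p, Ψ p ≠ ⊥)
    (hproper : ∀ y : Y, ∃ v : X, Ψ (y, v) ≠ ⊤)
    (hconv : ∀ (y : Y) (v w : X) (a b : ℝ), 0 ≤ a → 0 ≤ b → a + b = 1 →
      Ψ (y, a • v + b • w) ≤ (a : EReal) * Ψ (y, v) + (b : EReal) * Ψ (y, w))
    (hlsc : ∀ y : Y, LowerSemicontinuous fun v : X => Ψ (y, v))
    (G : X → EReal)
    {c₀ : ℝ} (hc₀ : ∀ v, (c₀ : EReal) ≤ G v)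
    (hGsuper : ∀ M : ℝ, ∃ cc : ℝ, ∀ v : X, ((M * ‖v‖ - cc : ℝ) : EReal) ≤ G v)
    (hGle : ∀ (y : Y) (v : X), G v ≤ Ψ (y, v))
    {K : ℝ} (hK : ∀ y : Y, Ψ (y, 0) ≤ (K : EReal))
    (husc : UpperSemicontinuous (partialConj Ψ))
    (ζ : Y → StrongDual ℝ X) (hζcont : Continuous ζ) {M : ℝ} (hM0 : 0 ≤ M) (hM : ∀ y, ‖ζ y‖ ≤ M)
    (c : ℝ) :
    ∃ (v : Y → X) (R : ℝ), Measurable v ∧ (∀ y, ‖v y‖ ≤ R) ∧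
      ∀ y : Y, (c : EReal) < partialConj Ψ (y, ζ y) →
        (c : EReal) ≤ ((ζ y (v y) : ℝ) : EReal) - Ψ (y, v y) := by
  classical
  obtain ⟨cM, hcM⟩ := hGsuper (M + 1)
  set R : ℝ := |cM - c| + 1 with hR_def
  have hR0 : (0:ℝ) ≤ R := by positivity
  set C1 : ℝ := M * R + |c| + |c₀| + 1 with hC1_def
  have hc₀C1 : c₀ - 1 ≤ C1 := by
    have := le_abs_self c₀
    have := abs_nonneg c
    have := mul_nonneg hM0 hR0
    linarith
  haveI hsep2 : TopologicalSpace.SeparableSpace (StrongDual ℝ (StrongDual ℝ X)) := by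
    have hcont : Continuous (inclusionInDoubleDual ℝ X) := (inclusionInDoubleDual ℝ X).continuous
    have hdr : DenseRange (inclusionInDoubleDual ℝ X) :=
      Function.Surjective.denseRange hrefl
    exact hdr.separableSpace hcont
  haveI hsepD : TopologicalSpace.SeparableSpace (StrongDual ℝ X) := separable_of_dual_separable
  obtain ⟨zs, hzs⟩ := TopologicalSpace.exists_dense_seq (StrongDual ℝ X)
  set ck : ℕ → ℝ := fun k => max 1 (R * ‖zs k‖) with hck_def
  have hckpos : ∀ k, 0 < ck k := fun k => lt_of_lt_of_le one_pos (le_max_left _ _)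
  have hckRz : ∀ k, R * ‖zs k‖ ≤ ck k := fun k => le_max_right _ _
  have hub : ∀ (y : Y) (z : StrongDual ℝ X), ∃ q : ℝ, partialConj Ψ (y, z) ≤ (q : EReal) := by
    intro y z
    obtain ⟨cz, hcz⟩ := hGsuper (‖z‖ + 1)
    exact ⟨cz, partialConj_upper hGle y z hcz⟩
  have hne_top : ∀ (y : Y) (z : StrongDual ℝ X), partialConj Ψ (y, z) ≠ ⊤ := by
    intro y z
    obtain ⟨q, hq⟩ := hub y z
    exact ne_top_of_le_ne_top (EReal.coe_ne_top q) hq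
  have hne_bot : ∀ (y : Y) (z : StrongDual ℝ X), partialConj Ψ (y, z) ≠ ⊥ := fun y z =>
    (lt_of_lt_of_le (EReal.bot_lt_coe _) (partialConj_lower y z (hK y))).ne'
  set ψ : Y → StrongDual ℝ X → ℝ := fun y z => (partialConj Ψ (y, z)).toReal with hψ_def
  have hψcoe : ∀ (y : Y) (z : StrongDual ℝ X), ((ψ y z : ℝ) : EReal) = partialConj Ψ (y, z) :=
    fun y z => EReal.coe_toReal (hne_top y z) (hne_bot y z)
  haveI hPIcc1 : PolishSpace (Set.Icc (-1:ℝ) 1) := (isClosed_Icc).polishSpace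
  haveI hPIcc2 : PolishSpace (Set.Icc (c₀ - 1) C1) := (isClosed_Icc).polishSpace
  haveI hNE2 : Nonempty (Set.Icc (c₀ - 1) C1) := ⟨⟨c₀ - 1, by
    rw [Set.mem_Icc]; exact ⟨le_refl _, hc₀C1⟩⟩⟩
  set Wt : Set (Y × ((ℕ → (Set.Icc (-1:ℝ) 1)) × (Set.Icc (c₀ - 1) C1))) :=
    {p | ∃ (v : X) (s : ℝ), ‖v‖ ≤ R ∧ Ψ (p.1, v) ≤ (s : EReal) ∧ c ≤ ζ p.1 v - s ∧
      (∀ k, zs k v = ck k * ((p.2.1 k : ℝ))) ∧ s = (p.2.2 : ℝ)} with hWt_def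
  have hbiconj : ∀ (y : Y) (w : X) (s : ℝ),
      (∀ z : StrongDual ℝ X, z w - ψ y z ≤ s) → Ψ (y, w) ≤ (s : EReal) := by
    intro y w s hall
    by_contra hcon
    push_neg at hcon
    obtain ⟨z, q, hq1, hq2⟩ := biconj_aux hbot y (hproper y) (hconv y) (hlsc y)
      (fun v => le_trans (hc₀ v) (hGle y v)) (hK y) w s hcon
    have hψq : ψ y z ≤ q := by
      have h2 := hq1
      rw [← hψcoe y z] at h2
      exact_mod_cast h2
    have := hall z
    linarith
  have hWtClosed : IsClosed Wt := by
    letI := TopologicalSpace.upgradeIsCompletelyMetrizable Y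
    refine IsSeqClosed.isClosed ?_
    intro ps p hps hlim
    have hY : Tendsto (fun n => (ps n).1) atTop (𝓝 p.1) := (continuous_fst.tendsto p).comp hlim
    have hH1 : ∀ k, Tendsto (fun n => ((ps n).2.1 k : ℝ)) atTop (𝓝 ((p.2.1 k : ℝ))) := by
      intro k
      have hcont : Continuous (fun q : Y × ((ℕ → (Set.Icc (-1:ℝ) 1)) × (Set.Icc (c₀ - 1) C1)) =>
          ((q.2.1 k : ℝ))) :=
        continuous_subtype_val.comp ((continuous_apply k).comp (continuous_fst.comp continuous_snd))
      exact (hcont.tendsto p).comp hlim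
    have hH2 : Tendsto (fun n => ((ps n).2.2 : ℝ)) atTop (𝓝 ((p.2.2 : ℝ))) := by
      have hcont : Continuous (fun q : Y × ((ℕ → (Set.Icc (-1:ℝ) 1)) × (Set.Icc (c₀ - 1) C1)) =>
          ((q.2.2 : ℝ))) :=
        continuous_subtype_val.comp (continuous_snd.comp continuous_snd)
      exact (hcont.tendsto p).comp hlim
    choose vv ss hv1 hv2 hv3 hv4 hv5 using hps
    have hss : Tendsto ss atTop (𝓝 ((p.2.2 : ℝ))) := by
      have he : ss = fun n => ((ps n).2.2 : ℝ) := funext fun n => hv5 n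
      rw [he]; exact hH2
    have hβ : ∀ k, Tendsto (fun n => zs k (vv n)) atTop (𝓝 (ck k * (p.2.1 k : ℝ))) := by
      intro k
      have he : (fun n => zs k (vv n)) = fun n => ck k * ((ps n).2.1 k : ℝ) :=
        funext fun n => hv4 n k
      rw [he]
      exact (hH1 k).const_mul _
    obtain ⟨w, hwR, hwconv⟩ := weak_limit_exists hrefl zs hzs hR0 vv hv1 _ hβ
    have hζY : Tendsto (fun n => ζ (ps n).1) atTop (𝓝 (ζ p.1)) := (hζcont.tendsto p.1).comp hY
    have hζlim : Tendsto (fun n => ζ (ps n).1 (vv n)) atTop (𝓝 (ζ p.1 w)) := by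
      have h1 : Tendsto (fun n => (ζ (ps n).1 - ζ p.1) (vv n)) atTop (𝓝 0) := by
        have hbnd : ∀ n, ‖(ζ (ps n).1 - ζ p.1) (vv n)‖ ≤ ‖ζ (ps n).1 - ζ p.1‖ * R := by
          intro n
          refine le_trans ((ζ (ps n).1 - ζ p.1).le_opNorm (vv n)) ?_
          exact mul_le_mul_of_nonneg_left (hv1 n) (norm_nonneg _)
        have hg0 : Tendsto (fun n => ‖ζ (ps n).1 - ζ p.1‖ * R) atTop (𝓝 0) := by
          have h2 : Tendsto (fun n => ‖ζ (ps n).1 - ζ p.1‖) atTop (𝓝 0) :=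
            tendsto_iff_norm_sub_tendsto_zero.mp hζY
          simpa using h2.mul_const R
        exact squeeze_zero_norm hbnd hg0
      have h3 := h1.add (hwconv (ζ p.1))
      rw [zero_add] at h3
      refine Tendsto.congr (fun n => ?_) h3
      have : (ζ (ps n).1 - ζ p.1) (vv n) = ζ (ps n).1 (vv n) - ζ p.1 (vv n) := rfl
      rw [this]; ring
    refine ⟨w, (p.2.2 : ℝ), hwR, ?_, ?_, ?_, rfl⟩
    · apply hbiconj
      intro z
      have hFY : ∀ n, z (vv n) - ψ ((ps n).1) z ≤ ss n := by
        intro n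
        have h1 := fenchel_young hbot ((ps n).1) z (vv n) (le_of_eq (hψcoe _ z).symm)
        have h2 := le_trans h1 (hv2 n)
        exact_mod_cast h2
      refine le_of_forall_pos_le_add fun ε hε => ?_
      have e1 : ∀ᶠ n in atTop, z w - ε/3 < z (vv n) :=
        (hwconv z).eventually (eventually_gt_nhds (by linarith))
      have e2 : ∀ᶠ n in atTop, ss n < (p.2.2 : ℝ) + ε/3 :=
        hss.eventually (eventually_lt_nhds (by linarith))
      have e3 : ∀ᶠ n in atTop, ψ ((ps n).1) z < ψ p.1 z + ε/3 := by
        have hlt : partialConj Ψ (p.1, z) < ((ψ p.1 z + ε/3 : ℝ) : EReal) := by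
          rw [← hψcoe p.1 z]
          exact_mod_cast (by linarith : ψ p.1 z < ψ p.1 z + ε/3)
        have hu := husc (p.1, z) _ hlt
        have htt : Tendsto (fun n => ((ps n).1, z)) atTop (𝓝 (p.1, z)) :=
          hY.prodMk_nhds tendsto_const_nhds
        refine (htt.eventually hu).mono fun n hn => ?_
        beta_reduce at hn
        rw [← hψcoe ((ps n).1) z] at hn
        exact_mod_cast hn
      obtain ⟨n, h1, h2⟩ := (e1.and (e2.and e3)).exists
      obtain ⟨h2, h3⟩ := h2
      have := hFY n
      linarith
    · have hlim2 : Tendsto (fun n => ζ (ps n).1 (vv n) - ss n) atTop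
          (𝓝 (ζ p.1 w - (p.2.2 : ℝ))) := hζlim.sub hss
      exact ge_of_tendsto hlim2 (Filter.Eventually.of_forall hv3)
    · intro k
      exact tendsto_nhds_unique (hwconv (zs k)) (hβ k)
  haveI : Nonempty ((ℕ → (Set.Icc (-1:ℝ) 1)) × (Set.Icc (c₀ - 1) C1)) :=
    ⟨⟨fun _ => ⟨0, by norm_num⟩, Classical.arbitrary _⟩⟩
  letI : MeasurableSpace ((ℕ → (Set.Icc (-1:ℝ) 1)) × (Set.Icc (c₀ - 1) C1)) := borel _
  haveI : BorelSpace ((ℕ → (Set.Icc (-1:ℝ) 1)) × (Set.Icc (c₀ - 1) C1)) := ⟨rfl⟩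
  obtain ⟨σ, hσMeas, hσ⟩ := exists_measurable_selection_of_closed hWtClosed
  have hinj : ∀ v w : X, (∀ k, zs k v = zs k w) → v = w := by
    intro v w hvw
    have h0 : ‖v - w‖ ≤ 0 := by
      refine norming_le zs hzs (v - w) 0 le_rfl fun k => ?_
      rw [map_sub, hvw k]
      simp
    exact sub_eq_zero.mp (norm_le_zero_iff.mp h0)
  have hβmeas : ∀ k, Measurable fun y => ((σ y).1 k : ℝ) := by
    intro k
    have hcont : Continuous
        (fun h : (ℕ → (Set.Icc (-1:ℝ) 1)) × (Set.Icc (c₀ - 1) C1) => ((h.1 k : ℝ))) :=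
      continuous_subtype_val.comp ((continuous_apply k).comp continuous_fst)
    exact hcont.measurable.comp hσMeas
  set S : Set (ℕ → ℝ) := {g | ∃ w : X, ‖w‖ ≤ R ∧ ∀ k, zs k w = ck k * g k} with hS_def
  have hSclosed : IsClosed S := by
    refine IsSeqClosed.isClosed ?_
    intro gs g hgs hglim
    choose ws hw1 hw2 using hgs
    have hβ2 : ∀ k, Tendsto (fun n => zs k (ws n)) atTop (𝓝 (ck k * g k)) := by
      intro k
      have he : (fun n => zs k (ws n)) = fun n => ck k * gs n k := funext fun n => hw2 n k
      rw [he]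
      exact (((continuous_apply k).tendsto g).comp hglim).const_mul _
    obtain ⟨w, hwR, hwconv⟩ := weak_limit_exists hrefl zs hzs hR0 ws hw1 _ hβ2
    exact ⟨w, hwR, fun k => tendsto_nhds_unique (hwconv (zs k)) (hβ2 k)⟩
  set Fc : Y → (ℕ → ℝ) := fun y => fun k => ((σ y).1 k : ℝ) with hFc_def
  have hFcMeas : Measurable Fc := measurable_pi_lambda _ hβmeas
  set D : Set Y := Fc ⁻¹' S with hD_def
  have hDmeas : MeasurableSet D := hFcMeas hSclosed.measurableSet
  set vfun : Y → X := fun y => if hy : Fc y ∈ S then hy.choose else 0 with hv_def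
  have hvR : ∀ y, ‖vfun y‖ ≤ R := by
    intro y
    simp only [hv_def]
    split_ifs with hy
    · exact hy.choose_spec.1
    · simpa using hR0
  have hvcoord : ∀ y, Fc y ∈ S → ∀ k, zs k (vfun y) = ck k * ((σ y).1 k : ℝ) := by
    intro y hy k
    simp only [hv_def]
    simp only [dif_pos hy]
    exact hy.choose_spec.2 k
  have hvmeas : Measurable vfun := by
    have hball : ∀ (x₀ : X) (r : ℝ), MeasurableSet (vfun ⁻¹' Metric.closedBall x₀ r) := by
      intro x₀ r
      rcases lt_or_ge r 0 with hr | hr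
      · rw [Metric.closedBall_eq_empty.mpr hr]
        simp
      · have hchar : vfun ⁻¹' Metric.closedBall x₀ r =
            (D ∩ ⋂ k, {y | |ck k * ((σ y).1 k : ℝ) - zs k x₀| ≤ r * ‖zs k‖}) ∪
            (Dᶜ ∩ (if (0:X) ∈ Metric.closedBall x₀ r then (Set.univ : Set Y) else ∅)) := by
          ext y
          simp only [Set.mem_preimage, Set.mem_union, Set.mem_inter_iff, Set.mem_compl_iff,
            Set.mem_iInter, Set.mem_setOf_eq]
          by_cases hy : y ∈ D
          · have hyS : Fc y ∈ S := hy
            have hcoords := hvcoord y hyS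
            simp only [hy, true_and, not_true, false_and, or_false]
            constructor
            · intro hmem k
              rw [← hcoords k]
              have he : zs k (vfun y) - zs k x₀ = zs k (vfun y - x₀) := (map_sub _ _ _).symm
              rw [he]
              calc |zs k (vfun y - x₀)| ≤ ‖zs k‖ * ‖vfun y - x₀‖ := (zs k).le_opNorm _
                _ ≤ ‖zs k‖ * r := by
                    refine mul_le_mul_of_nonneg_left ?_ (norm_nonneg _)
                    rwa [Metric.mem_closedBall, dist_eq_norm] at hmem
                _ = r * ‖zs k‖ := mul_comm _ _
            · intro hk
              rw [Metric.mem_closedBall, dist_eq_norm]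
              refine norming_le zs hzs _ r hr fun k => ?_
              have he : zs k (vfun y - x₀) = ck k * ((σ y).1 k:ℝ) - zs k x₀ := by
                rw [map_sub, hcoords k]
              rw [he]
              exact hk k
          · have hyS : ¬ (Fc y ∈ S) := hy
            have hv0 : vfun y = 0 := by simp only [hv_def]; simp only [dif_neg hyS]
            rw [hv0]
            by_cases h0 : (0:X) ∈ Metric.closedBall x₀ r
            · simp [hy, h0]
            · simp [hy, h0]
        rw [hchar]
        refine MeasurableSet.union ?_ ?_
        · refine hDmeas.inter (MeasurableSet.iInter fun k => ?_)
          have hm : Measurable fun y => |ck k * ((σ y).1 k : ℝ) - zs k x₀| :=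
            ((measurable_const.mul (hβmeas k)).sub measurable_const).abs
          exact measurableSet_le hm measurable_const
        · split_ifs with h0
          · rw [Set.inter_univ]
            exact hDmeas.compl
          · rw [Set.inter_empty]
            exact MeasurableSet.empty
    have hopen : ∀ (U : Set X), IsOpen U → MeasurableSet (vfun ⁻¹' U) := by
      intro U hU
      obtain ⟨dX, hdX⟩ := TopologicalSpace.exists_dense_seq X
      have hcover : U = ⋃ (p : ℕ × ℚ) (_ : 0 < (p.2:ℝ) ∧ Metric.closedBall (dX p.1) p.2 ⊆ U),
          Metric.closedBall (dX p.1) (p.2:ℝ) := by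
        apply Set.Subset.antisymm
        · intro x hx
          obtain ⟨ε, hε, hballU⟩ := Metric.isOpen_iff.mp hU x hx
          obtain ⟨i, hi⟩ := Metric.denseRange_iff.mp hdX x (ε/4) (by linarith)
          obtain ⟨q, hq1, hq2⟩ := exists_rat_btwn (show ε/4 < ε/2 by linarith)
          have hq0 : 0 < (q:ℝ) := lt_trans (by linarith) hq1
          refine Set.mem_iUnion.mpr ⟨(i, q), Set.mem_iUnion.mpr ⟨⟨hq0, ?_⟩, ?_⟩⟩
          · intro z hz
            rw [Metric.mem_closedBall] at hz
            apply hballU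
            rw [Metric.mem_ball]
            have hxd : dist (dX i) x < ε/4 := by rwa [dist_comm] at hi
            calc dist z x ≤ dist z (dX i) + dist (dX i) x := dist_triangle _ _ _
              _ ≤ (q:ℝ) + ε/4 := add_le_add hz (le_of_lt hxd)
              _ < ε := by linarith
          · rw [Metric.mem_closedBall]
            exact le_of_lt (lt_trans hi hq1)
        · intro x hx
          obtain ⟨p, hp⟩ := Set.mem_iUnion.mp hx
          obtain ⟨hcond, hmem⟩ := Set.mem_iUnion.mp hp
          exact hcond.2 hmem
      rw [hcover, Set.preimage_iUnion]
      refine MeasurableSet.iUnion fun p => ?_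
      rw [Set.preimage_iUnion]
      exact MeasurableSet.iUnion fun hp => hball _ _
    exact measurable_of_isOpen hopen
  refine ⟨vfun, R, hvmeas, hvR, ?_⟩
  intro y hy
  rw [partialConj_def, lt_iSup_iff] at hy
  obtain ⟨v, hv⟩ := hy
  have hT : Ψ (y, v) ≠ ⊤ := by
    intro hT
    rw [hT, EReal.sub_top] at hv
    exact absurd hv (by simp)
  set s : ℝ := (Ψ (y, v)).toReal with hs_def
  have hΨs : Ψ (y, v) = (s : EReal) := (EReal.coe_toReal hT (hbot (y, v))).symm
  have hcs : c < ζ y v - s := by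
    rw [hΨs, ← EReal.coe_sub] at hv
    exact_mod_cast hv
  have hsG : ((M+1) * ‖v‖ - cM : ℝ) ≤ s := by
    have h1 := le_trans (hcM v) (hGle y v)
    rw [hΨs] at h1
    exact_mod_cast h1
  have hζv : ζ y v ≤ M * ‖v‖ := by
    have h1 : ζ y v ≤ ‖ζ y‖ * ‖v‖ := le_trans (le_abs_self _) ((ζ y).le_opNorm v)
    have h2 : ‖ζ y‖ * ‖v‖ ≤ M * ‖v‖ := mul_le_mul_of_nonneg_right (hM y) (norm_nonneg v)
    linarith
  have hvR' : ‖v‖ ≤ R := by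
    have h3 : ‖v‖ < cM - c := by nlinarith
    rw [hR_def]
    have h4 := le_abs_self (cM - c)
    linarith
  have hsc₀ : c₀ ≤ s := by
    have h1 := le_trans (hc₀ v) (hGle y v)
    rw [hΨs] at h1
    exact_mod_cast h1
  have hsC1 : s ≤ C1 := by
    have h2 : ζ y v ≤ M * R := le_trans hζv (mul_le_mul_of_nonneg_left hvR' hM0)
    have h3 := neg_abs_le c
    have h4 := abs_nonneg c₀
    rw [hC1_def]
    linarith
  have hcoordbd : ∀ k, zs k v / ck k ∈ Set.Icc (-1:ℝ) 1 := by
    intro k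
    have h1 : |zs k v| ≤ ck k := by
      calc |zs k v| ≤ ‖zs k‖ * ‖v‖ := (zs k).le_opNorm v
        _ ≤ ‖zs k‖ * R := mul_le_mul_of_nonneg_left hvR' (norm_nonneg _)
        _ = R * ‖zs k‖ := mul_comm _ _
        _ ≤ ck k := hckRz k
    have h2 : |zs k v / ck k| ≤ 1 := by
      rw [abs_div, abs_of_pos (hckpos k)]
      exact (div_le_one (hckpos k)).mpr h1
    rw [Set.mem_Icc, ← abs_le]
    exact h2
  have hfiber : (y, ((fun k => (⟨zs k v / ck k, hcoordbd k⟩ : Set.Icc (-1:ℝ) 1)),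
      (⟨s, by rw [Set.mem_Icc]; exact ⟨by linarith, hsC1⟩⟩ : Set.Icc (c₀-1) C1))) ∈ Wt := by
    refine ⟨v, s, hvR', le_of_eq hΨs, le_of_lt hcs, ?_, rfl⟩
    intro k
    simp only []
    rw [mul_div_cancel₀ _ (ne_of_gt (hckpos k))]
  have hmem := hσ y ⟨_, hfiber⟩
  obtain ⟨v', s', hv'R, hΨ', hζ', hcoord', hs'⟩ := hmem
  have hyS : Fc y ∈ S := ⟨v', hv'R, hcoord'⟩
  have hveq : vfun y = v' := by
    have h1 := hvcoord y hyS
    refine hinj _ _ fun k => ?_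
    rw [h1 k, hcoord' k]
  rw [hveq]
  calc ((c:ℝ) : EReal) ≤ ((ζ y v' - s' : ℝ) : EReal) := by exact_mod_cast hζ'
    _ = ((ζ y v' : ℝ) : EReal) - ((s' : ℝ) : EReal) := EReal.coe_sub _ _
    _ ≤ ((ζ y v' : ℝ) : EReal) - Ψ (y, v') := EReal.sub_le_sub le_rfl hΨ'
end Level


/-- Dual formula for the integral of `Ψ*`: for every bounded continuous `ζ : Y → X*` and every
finite measure `μ`,
`∫ Ψ*(y, ζ(y)) dμ = sup { ∫ (⟨ζ(y), v(y)⟩ - Ψ(y, v(y))) dμ : v ∈ L¹_μ(Y;X) }`. -/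
theorem integral_partialConj_dual_formula
    {Y : Type*} [TopologicalSpace Y] [PolishSpace Y] [MeasurableSpace Y] [BorelSpace Y]
    {X : Type*} [NormedAddCommGroup X] [NormedSpace ℝ X] [CompleteSpace X]
    [TopologicalSpace.SeparableSpace X]
    (hrefl : Function.Surjective (NormedSpace.inclusionInDoubleDual ℝ X))
    (Ψ : Y × X → EReal) (hbot : ∀ p, Ψ p ≠ ⊥)
    (hproper : ∀ y : Y, ∃ v : X, Ψ (y, v) ≠ ⊤)
    (hconv : ∀ (y : Y) (v w : X) (a b : ℝ), 0 ≤ a → 0 ≤ b → a + b = 1 →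
      Ψ (y, a • v + b • w) ≤ (a : EReal) * Ψ (y, v) + (b : EReal) * Ψ (y, w))
    (hlsc : ∀ y : Y, LowerSemicontinuous fun v : X => Ψ (y, v))
    (G : X → EReal)
    (hGbd : ∃ c : ℝ, ∀ v : X, (c : EReal) ≤ G v)
    (hGsuper : ∀ M : ℝ, ∃ c : ℝ, ∀ v : X, ((M * ‖v‖ - c : ℝ) : EReal) ≤ G v)
    (hGle : ∀ (y : Y) (v : X), G v ≤ Ψ (y, v))
    (hzero : ∃ K : ℝ, ∀ y : Y, Ψ (y, 0) ≤ (K : EReal))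
    (husc : UpperSemicontinuous (partialConj Ψ))
    (ζ : Y → StrongDual ℝ X) (hζcont : Continuous ζ) (hζbdd : ∃ M : ℝ, ∀ y, ‖ζ y‖ ≤ M)
    (μ : Measure Y) (hμ : IsFiniteMeasure μ) :
    eint μ (fun y => partialConj Ψ (y, ζ y)) =
      ⨆ (v : Y → X) (_ : Integrable v μ),
        eint μ (fun y => ((ζ y (v y) : ℝ) : EReal) - Ψ (y, v y)) := by
  classical
  obtain ⟨K, hK⟩ := hzero
  obtain ⟨c₀, hc₀⟩ := hGbd
  obtain ⟨M₀, hM₀⟩ := hζbdd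
  set M : ℝ := max M₀ 0 with hM_def
  have hM : ∀ y, ‖ζ y‖ ≤ M := fun y => le_trans (hM₀ y) (le_max_left _ _)
  have hM0 : (0:ℝ) ≤ M := le_max_right _ _
  letI : MeasurableSpace X := borel X
  haveI : BorelSpace X := ⟨rfl⟩
  haveI : SecondCountableTopology X := UniformSpace.secondCountable_of_separable X
  obtain ⟨cU, hcU⟩ := hGsuper (M + 1)
  -- upper bound for f
  have hfub : ∀ y, partialConj Ψ (y, ζ y) ≤ (cU : EReal) := by
    intro y
    refine partialConj_upper hGle y (ζ y) fun v => le_trans ?_ (hcU v)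
    rw [EReal.coe_le_coe_iff]
    have h1 : ‖ζ y‖ * ‖v‖ ≤ M * ‖v‖ := mul_le_mul_of_nonneg_right (hM y) (norm_nonneg v)
    nlinarith [norm_nonneg v]
  have hflb : ∀ y, ((-K : ℝ) : EReal) ≤ partialConj Ψ (y, ζ y) :=
    fun y => partialConj_lower y (ζ y) (hK y)
  have hfne_top : ∀ y, partialConj Ψ (y, ζ y) ≠ ⊤ :=
    fun y => ne_top_of_le_ne_top (EReal.coe_ne_top cU) (hfub y)
  have hfne_bot : ∀ y, partialConj Ψ (y, ζ y) ≠ ⊥ :=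
    fun y => (lt_of_lt_of_le (EReal.bot_lt_coe _) (hflb y)).ne'
  set φ : Y → ℝ := fun y => (partialConj Ψ (y, ζ y)).toReal with hφ_def
  have hφcoe : ∀ y, ((φ y : ℝ) : EReal) = partialConj Ψ (y, ζ y) :=
    fun y => EReal.coe_toReal (hfne_top y) (hfne_bot y)
  set Cb : ℝ := |K| + |cU| + 1 with hCb_def
  have hφub : ∀ y, φ y ≤ cU := by
    intro y
    have := hfub y
    rw [← hφcoe y] at this
    exact_mod_cast this
  have hφlb : ∀ y, -K ≤ φ y := by
    intro y
    have h0 := hflb y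
    rw [← hφcoe y] at h0
    exact EReal.coe_le_coe_iff.mp h0
  have hφbd : ∀ y, |φ y| ≤ Cb := by
    intro y
    rw [abs_le, hCb_def]
    have h1 := hφub y
    have h2 := hφlb y
    have h3 := le_abs_self K
    have h4 := le_abs_self cU
    have h5 := neg_abs_le K
    have h6 := abs_nonneg cU
    have h7 := abs_nonneg K
    constructor <;> linarith
  have hfusc : UpperSemicontinuous fun y => partialConj Ψ (y, ζ y) := by
    intro y b hb
    have hcont : Tendsto (fun y' => (y', ζ y')) (𝓝 y) (𝓝 (y, ζ y)) :=
      (continuous_id.prodMk hζcont).tendsto y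
    exact hcont.eventually (husc (y, ζ y) b hb)
  have hfmeas : Measurable fun y => partialConj Ψ (y, ζ y) := hfusc.measurable
  have hφmeas : Measurable φ := measurable_ereal_toReal.comp hfmeas
  have hfeq : (fun y => partialConj Ψ (y, ζ y)) = fun y => ((φ y : ℝ) : EReal) :=
    funext fun y => (hφcoe y).symm
  set m0 : ℝ := (μ Set.univ).toReal with hm0_def
  have hm00 : 0 ≤ m0 := ENNReal.toReal_nonneg
  apply le_antisymm
  · -- hard direction
    rw [hfeq, eint_real μ φ hφmeas Cb hφbd]
    set I : ℝ := ∫ y, φ y ∂μ with hI_def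
    have key : ∀ δ : ℝ, 0 < δ →
        ((I - 2*δ*m0 : ℝ) : EReal) ≤ ⨆ (v : Y → X) (_ : Integrable v μ),
          eint μ (fun y => ((ζ y (v y) : ℝ) : EReal) - Ψ (y, v y)) := by
      intro δ hδ
      set a : ℝ := -Cb - 1 with ha_def
      have halow : ∀ y, a + 1 ≤ φ y := by
        intro y
        have h1 := hφbd y
        rw [abs_le] at h1
        rw [ha_def]
        linarith [h1.1]
      have hselall : ∀ i : ℕ, ∃ (v : Y → X) (R : ℝ), Measurable v ∧ (∀ y, ‖v y‖ ≤ R) ∧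
          ∀ y : Y, ((a + i*δ - δ : ℝ) : EReal) < partialConj Ψ (y, ζ y) →
            ((a + i*δ - δ : ℝ) : EReal) ≤ ((ζ y (v y) : ℝ) : EReal) - Ψ (y, v y) :=
        fun i => level_selection hrefl Ψ hbot hproper hconv hlsc G hc₀ hGsuper hGle hK
          husc ζ hζcont hM0 hM (a + i*δ - δ)
      choose vs Rs hvsmeas hvsbd hvsval using hselall
      set idx : Y → ℕ := fun y => ⌊(φ y - a)/δ⌋₊ with hidx_def
      have hargnn : ∀ y, 0 ≤ (φ y - a)/δ := by
        intro y
        apply div_nonneg _ (le_of_lt hδ)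
        linarith [halow y]
      have hidx1 : ∀ y, a + (idx y : ℝ)*δ ≤ φ y := by
        intro y
        have h1 : ((idx y : ℝ)) ≤ (φ y - a)/δ := Nat.floor_le (hargnn y)
        rw [le_div_iff₀ hδ] at h1
        linarith
      have hidx2 : ∀ y, φ y < a + ((idx y : ℝ) + 1)*δ := by
        intro y
        have h1 : (φ y - a)/δ < (idx y : ℝ) + 1 := Nat.lt_floor_add_one _
        rw [div_lt_iff₀ hδ] at h1
        linarith
      have hidxmeas : Measurable idx := by
        refine measurable_to_countable' fun i => ?_
        have heq : idx ⁻¹' {i} = {y | (i:ℝ) ≤ (φ y - a)/δ} ∩ {y | (φ y - a)/δ < (i:ℝ)+1} := by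
          ext y
          simp only [Set.mem_preimage, Set.mem_singleton_iff, Set.mem_inter_iff, Set.mem_setOf_eq,
            hidx_def]
          rw [Nat.floor_eq_iff (hargnn y)]
        rw [heq]
        have hm1 : Measurable fun y => (φ y - a)/δ := (hφmeas.sub measurable_const).div_const δ
        exact (measurableSet_le measurable_const hm1).inter (measurableSet_lt hm1 measurable_const)
      set v : Y → X := fun y => vs (idx y) y with hv_def
      have hvmeas : Measurable v := by
        intro s hs
        have heq : v ⁻¹' s = ⋃ i, (idx ⁻¹' {i}) ∩ (vs i ⁻¹' s) := by
          ext y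
          simp only [Set.mem_preimage, Set.mem_iUnion, Set.mem_inter_iff, Set.mem_singleton_iff,
            hv_def]
          constructor
          · intro h
            exact ⟨idx y, rfl, h⟩
          · rintro ⟨i, h1, h2⟩
            rw [h1]
            exact h2
        rw [heq]
        exact MeasurableSet.iUnion fun i =>
          (hidxmeas (measurableSet_singleton i)).inter (hvsmeas i hs)
      -- bound on idx
      set N₀ : ℕ := ⌊(cU - a)/δ⌋₊ with hN₀_def
      have hidxbd : ∀ y, idx y ≤ N₀ := by
        intro y
        apply Nat.floor_le_floor
        apply div_le_div_of_nonneg_right _ hδ.le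
        · linarith [hφub y]
      set Cv : ℝ := ∑ i ∈ Finset.range (N₀ + 1), max (Rs i) 0 with hCv_def
      have hvbd : ∀ y, ‖v y‖ ≤ Cv := by
        intro y
        have h1 : ‖v y‖ ≤ max (Rs (idx y)) 0 := le_trans (hvsbd (idx y) y) (le_max_left _ _)
        refine le_trans h1 ?_
        rw [hCv_def]
        exact Finset.single_le_sum (f := fun i => max (Rs i) 0)
          (fun i _ => le_max_right _ _) (Finset.mem_range.mpr (Nat.lt_succ_of_le (hidxbd y)))
      have hvint : Integrable v μ := by
        refine ⟨(hvmeas.stronglyMeasurable).aestronglyMeasurable, ?_⟩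
        exact HasFiniteIntegral.of_bounded (C := Cv) (Filter.Eventually.of_forall hvbd)
      -- pointwise bound
      have hpt : ∀ y, ((φ y - 2*δ : ℝ) : EReal) ≤ ((ζ y (v y) : ℝ) : EReal) - Ψ (y, v y) := by
        intro y
        have hc1 : ((a + (idx y : ℝ)*δ - δ : ℝ) : EReal) < partialConj Ψ (y, ζ y) := by
          rw [← hφcoe y, EReal.coe_lt_coe_iff]
          have := hidx1 y
          linarith
        have h2 := hvsval (idx y) y hc1
        refine le_trans ?_ h2
        rw [EReal.coe_le_coe_iff]
        have := hidx2 y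
        linarith
      -- integral bound
      have hsub : eint μ (fun y => ((φ y - 2*δ : ℝ) : EReal)) = ((I - 2*δ*m0 : ℝ) : EReal) := by
        rw [eint_real μ (fun y => φ y - 2*δ) (hφmeas.sub measurable_const) (Cb + 2*δ)
          (fun y => by
            have := hφbd y
            rw [abs_le] at this ⊢
            constructor <;> [linarith [this.1]; linarith [this.2]])]
        congr 1
        rw [integral_sub ⟨hφmeas.stronglyMeasurable.aestronglyMeasurable,
          HasFiniteIntegral.of_bounded (C := Cb) (Filter.Eventually.of_forall fun y => by
            rw [Real.norm_eq_abs]; exact hφbd y)⟩ (integrable_const _)]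
        rw [integral_const, smul_eq_mul, hI_def, hm0_def, measureReal_def]
        ring
      calc ((I - 2*δ*m0 : ℝ) : EReal) = eint μ (fun y => ((φ y - 2*δ : ℝ) : EReal)) := hsub.symm
        _ ≤ eint μ (fun y => ((ζ y (v y) : ℝ) : EReal) - Ψ (y, v y)) := eint_mono μ hpt
        _ ≤ ⨆ (v : Y → X) (_ : Integrable v μ),
              eint μ (fun y => ((ζ y (v y) : ℝ) : EReal) - Ψ (y, v y)) := by
            exact le_iSup₂_of_le v hvint (le_refl _)
    -- pass to the limit δ → 0
    have hlim : Tendsto (fun n : ℕ => ((I - 2*(1/(n+1))*m0 : ℝ) : EReal)) atTop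
        (𝓝 ((I : ℝ) : EReal)) := by
      have h1 : Tendsto (fun n : ℕ => (I - 2*(1/(n+1))*m0 : ℝ)) atTop (𝓝 I) := by
        have h2 : Tendsto (fun n : ℕ => (1:ℝ)/(n+1)) atTop (𝓝 0) :=
          tendsto_one_div_add_atTop_nhds_zero_nat
        have h3 : Tendsto (fun n : ℕ => 2*((1:ℝ)/(n+1))*m0) atTop (𝓝 0) := by
          have := (h2.const_mul 2).mul_const m0
          simpa using this
        have := tendsto_const_nhds (x := I) (f := atTop (α := ℕ)) |>.sub h3
        simpa using this
      exact (continuous_coe_real_ereal.tendsto I).comp h1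
    refine le_of_tendsto hlim (Filter.Eventually.of_forall fun n => ?_)
    exact key (1/(n+1)) (by positivity)
  · -- easy direction
    refine iSup_le fun v => iSup_le fun hv => ?_
    refine eint_mono μ fun y => ?_
    exact le_partialConj y (ζ y) (v y)
end

section
/- Let Ψ : Y × X → (-∞,+∞] satisfy: Ψ(y,·) proper convex lsc, Ψ(y,v) ≥ G(v) with G bounded below and superlinear, sup_y Ψ(y,0) < ∞, dom Ψ = Y × D for a fixed D ⊆ X, and y ↦ Ψ(y,v) lower semicontinuous uniformly on sublevels of G (for all y, ε > 0 and C there is a neighborhood U of y with sup_{v ∈ {G≤C}∩D}(Ψ(y,v) - Ψ(ỹ,v)) ≤ ε for all ỹ ∈ U). Then the partial conjugate (y,z) ↦ Ψ*(y,z) is upper semicontinuous on Y × X*. -/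
open MeasureTheory NormedSpace Filter Topology

/-- If `Ψ(y,·)` is proper convex lsc, bounded below by a superlinear `G`, `sup_y Ψ(y,0) < ∞`,
the domain of `Ψ` has the product form `Y × D`, and `y ↦ Ψ(y,v)` is lower semicontinuous
uniformly on the sublevels of `G`, then the partial conjugate `(y,z) ↦ Ψ*(y,z)` is upper
semicontinuous on `Y × X*`. -/
theorem partialConj_upperSemicontinuous
    {Y : Type*} [TopologicalSpace Y] [PolishSpace Y]
    {X : Type*} [NormedAddCommGroup X] [NormedSpace ℝ X] [CompleteSpace X]
    [TopologicalSpace.SeparableSpace X]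
    (hrefl : Function.Surjective (NormedSpace.inclusionInDoubleDual ℝ X))
    (Ψ : Y × X → EReal) (hbot : ∀ p, Ψ p ≠ ⊥)
    (hproper : ∀ y : Y, ∃ v : X, Ψ (y, v) ≠ ⊤)
    (hconv : ∀ (y : Y) (v w : X) (a b : ℝ), 0 ≤ a → 0 ≤ b → a + b = 1 →
      Ψ (y, a • v + b • w) ≤ (a : EReal) * Ψ (y, v) + (b : EReal) * Ψ (y, w))
    (hlsc : ∀ y : Y, LowerSemicontinuous fun v : X => Ψ (y, v))
    (G : X → EReal)
    (hGbd : ∃ c : ℝ, ∀ v : X, (c : EReal) ≤ G v)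
    (hGsuper : ∀ M : ℝ, ∃ c : ℝ, ∀ v : X, ((M * ‖v‖ - c : ℝ) : EReal) ≤ G v)
    (hGle : ∀ (y : Y) (v : X), G v ≤ Ψ (y, v))
    (hzero : ∃ K : ℝ, ∀ y : Y, Ψ (y, 0) ≤ (K : EReal))
    -- `dom Ψ = Y × D` for a fixed `D ⊆ X`:
    (D : Set X) (hdom : ∀ (y : Y) (v : X), Ψ (y, v) ≠ ⊤ ↔ v ∈ D)
    -- `y ↦ Ψ(y,v)` is lower semicontinuous, uniformly on sublevels of `G`:
    (hunif : ∀ (y : Y) (ε : ℝ), 0 < ε → ∀ C : ℝ, ∃ U ∈ nhds y, ∀ y' ∈ U,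
      ∀ v ∈ {v : X | G v ≤ (C : EReal)} ∩ D, Ψ (y, v) ≤ Ψ (y', v) + (ε : EReal)) :
    UpperSemicontinuous (partialConj Ψ) := by
  obtain ⟨K, hK⟩ := hzero
  obtain ⟨c₀, hc₀⟩ := hGbd
  intro p t ht
  obtain ⟨y₀, z₀⟩ := p
  set R : ℝ := ‖z₀‖ + 1 with hRdef
  have hR1 : (1:ℝ) ≤ R := by have := norm_nonneg z₀; simp only [hRdef]; linarith
  obtain ⟨c₂, hc₂⟩ := hGsuper (2*R)
  obtain ⟨c₁, hc₁⟩ := hGsuper 1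
  set C : ℝ := c₂ + 2*K with hCdef
  set B : ℝ := max (C + c₁) 0 with hBdef
  have hB0 : 0 ≤ B := le_max_right _ _
  -- lower bound on the conjugate at the base point
  have hΨ0top : Ψ (y₀, (0:X)) ≠ ⊤ := by
    intro h
    have := hK y₀
    rw [h] at this
    exact absurd this (by simp)
  have hΨ0eq : Ψ (y₀, (0:X)) = ((Ψ (y₀, (0:X))).toReal : EReal) :=
    (EReal.coe_toReal hΨ0top (hbot _)).symm
  have hΨ0le : (Ψ (y₀, (0:X))).toReal ≤ K := by
    have := hK y₀; rw [hΨ0eq] at this; exact_mod_cast this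
  have hlow : ((-K : ℝ) : EReal) ≤ partialConj Ψ (y₀, z₀) := by
    have h0 : ((z₀ 0 : ℝ) : EReal) - Ψ (y₀, (0:X)) ≤ partialConj Ψ (y₀, z₀) :=
      le_iSup (fun v : X => ((z₀ v : EReal) - Ψ ((y₀, z₀).1, v))) (0:X)
    refine le_trans ?_ h0
    rw [hΨ0eq, map_zero]
    rw [show ((0:ℝ):EReal) - ((Ψ (y₀, (0:X))).toReal : EReal)
        = ((0 - (Ψ (y₀, (0:X))).toReal : ℝ) : EReal) by norm_cast]
    exact_mod_cast (by linarith : -K ≤ 0 - (Ψ (y₀, (0:X))).toReal)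
  obtain ⟨m, hm1, hm2⟩ := EReal.exists_between_coe_real ht
  obtain ⟨r, hr1, hr2⟩ := EReal.exists_between_coe_real hm2
  have hmr : m < r := by exact_mod_cast hr1
  have hKm : -K ≤ m := by
    have := lt_of_le_of_lt hlow hm1; exact_mod_cast this.le
  set ε : ℝ := (r - m)/2 with hεdef
  have hε : 0 < ε := by simp [hεdef]; linarith
  set δ : ℝ := (r - m)/(2*(B+1)) with hδdef
  have hδ : 0 < δ := by
    apply div_pos (by linarith) (by linarith)
  have hδB : δ * B ≤ (r - m)/2 := by
    rw [hδdef, div_mul_eq_mul_div, div_le_div_iff₀ (by linarith) (by norm_num)]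
    nlinarith
  obtain ⟨U, hU, hUs⟩ := hunif y₀ ε hε C
  have hmem : U ×ˢ Metric.ball z₀ (min δ 1) ∈ nhds (y₀, z₀) :=
    prod_mem_nhds hU (Metric.ball_mem_nhds _ (lt_min hδ one_pos))
  filter_upwards [hmem] with q hq
  obtain ⟨y, z⟩ := q
  obtain ⟨hyU, hzb⟩ := hq
  have hzz₀ : ‖z - z₀‖ < min δ 1 := by
    have := Metric.mem_ball.mp hzb; rwa [dist_eq_norm] at this
  have hzR : ‖z‖ ≤ R := by
    have h1 : ‖z‖ - ‖z₀‖ ≤ ‖z - z₀‖ := norm_sub_norm_le z z₀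
    have h2 : ‖z - z₀‖ < 1 := lt_of_lt_of_le hzz₀ (min_le_right _ _)
    simp only [hRdef]; linarith
  have hzδ : ‖z - z₀‖ ≤ δ := le_of_lt (lt_of_lt_of_le hzz₀ (min_le_left _ _))
  refine lt_of_le_of_lt (le_trans ?_ (le_of_eq rfl : ((r:EReal)) ≤ r)) hr2
  refine iSup_le fun v => ?_
  by_cases hvD : v ∈ D
  · have hΨtop : Ψ (y, v) ≠ ⊤ := (hdom y v).mpr hvD
    set a : ℝ := (Ψ (y, v)).toReal with hadef
    have haeq : Ψ (y, v) = (a : EReal) := (EReal.coe_toReal hΨtop (hbot _)).symm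
    have hGtop : G v ≠ ⊤ := fun h => hΨtop (top_le_iff.mp (h ▸ hGle y v))
    have hGbot : G v ≠ ⊥ := fun h => by
      have := hc₀ v; rw [h] at this; exact absurd this (by simp)
    set g : ℝ := (G v).toReal with hgdef
    have hgeq : G v = (g : EReal) := (EReal.coe_toReal hGtop hGbot).symm
    have hga : g ≤ a := by
      have := hGle y v; rw [hgeq, haeq] at this; exact_mod_cast this
    have hzv : z v ≤ R * ‖v‖ := by
      have h1 : z v ≤ ‖z‖ * ‖v‖ := le_trans (le_abs_self _) (z.le_opNorm v)
      have h2 : ‖z‖ * ‖v‖ ≤ R * ‖v‖ :=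
        mul_le_mul_of_nonneg_right hzR (norm_nonneg v)
      linarith
    rw [haeq, show ((z v : ℝ) : EReal) - ((a:ℝ) : EReal) = ((z v - a : ℝ) : EReal) by norm_cast]
    rw [EReal.coe_le_coe_iff]
    by_cases hgC : g ≤ C
    · -- v in the sublevel set: use uniform lsc and the base conjugate bound
      have hΨ₀top : Ψ (y₀, v) ≠ ⊤ := (hdom y₀ v).mpr hvD
      set a₀ : ℝ := (Ψ (y₀, v)).toReal with ha₀def
      have ha₀eq : Ψ (y₀, v) = (a₀ : EReal) := (EReal.coe_toReal hΨ₀top (hbot _)).symm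
      have hvS : v ∈ {v : X | G v ≤ (C : EReal)} ∩ D :=
        ⟨by simp only [Set.mem_setOf_eq, hgeq]; exact_mod_cast hgC, hvD⟩
      have hlsc' : a₀ ≤ a + ε := by
        have := hUs y hyU v hvS
        rw [ha₀eq, haeq,
          show ((a:ℝ):EReal) + ((ε:ℝ):EReal) = ((a + ε : ℝ) : EReal) by norm_cast] at this
        exact_mod_cast this
      have hbase : z₀ v - a₀ ≤ m := by
        have h0 : ((z₀ v : ℝ) : EReal) - Ψ (y₀, v) ≤ partialConj Ψ (y₀, z₀) :=
          le_iSup (fun v : X => ((z₀ v : EReal) - Ψ ((y₀, z₀).1, v))) v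
        have := lt_of_le_of_lt h0 hm1
        rw [ha₀eq,
          show ((z₀ v : ℝ):EReal) - ((a₀:ℝ):EReal) = ((z₀ v - a₀ : ℝ) : EReal) by norm_cast]
          at this
        exact_mod_cast this.le
      have hvB : ‖v‖ ≤ B := by
        have h1 := hc₁ v
        rw [hgeq] at h1
        have h1' : 1 * ‖v‖ - c₁ ≤ g := by exact_mod_cast h1
        have : ‖v‖ ≤ C + c₁ := by linarith
        exact le_trans this (le_max_left _ _)
      have hdiff : z v - z₀ v ≤ δ * B := by
        have h1 : z v - z₀ v ≤ ‖z - z₀‖ * ‖v‖ := by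
          have := le_trans (le_abs_self _) ((z - z₀).le_opNorm v)
          simpa using this
        have h2 : ‖z - z₀‖ * ‖v‖ ≤ δ * B :=
          mul_le_mul hzδ hvB (norm_nonneg v) (le_of_lt hδ)
        linarith
      have : z v - a ≤ (z₀ v - a₀) + δ * B + ε := by linarith
      calc z v - a ≤ (z₀ v - a₀) + δ * B + ε := this
        _ ≤ m + (r - m)/2 + (r - m)/2 := by
            have := hδB; simp only [hεdef]; linarith
        _ = r := by ring
    · -- far from the sublevel set: superlinearity kills the term
      push_neg at hgC
      have h2R : 2*R*‖v‖ - c₂ ≤ g := by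
        have := hc₂ v; rw [hgeq] at this; exact_mod_cast this
      have : z v - a ≤ -K := by nlinarith [norm_nonneg v]
      linarith
  · have hΨtop : Ψ (y, v) = ⊤ := by
      by_contra h; exact hvD ((hdom y v).mp h)
    rw [hΨtop]
    rw [show ((⊤:EReal)) = ⊤ from rfl]
    simp [sub_eq_add_neg]
end

section
/- Let X = ℝⁿ, let ψ : ℝⁿ → ℝ be convex with Fenchel conjugate ψ*, and let φ : ℝⁿ → ℝ be a C¹ coercive function with |Dφ(x)| → ∞ as |x| → ∞. Suppose ξ : [0,T] × ℝⁿ → ℝ is C¹, bounded, and satisfies strictly, for all (t,x): -∂_t ξ(t,x) + ψ*(-D_x ξ(t,x)) < ψ*(-Dφ(x)) and ξ(T,x) < φ(x). Then ξ(t,x) < φ(x) for all (t,x) ∈ [0,T] × ℝⁿ. -/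
open Filter Topology Set
open scoped RealInnerProductSpace

namespace Stmt16

variable {n : ℕ}

/-- The Fenchel conjugate of `ψ : ℝⁿ → ℝ`, with values in `(-∞,+∞]` (as `EReal`). -/
noncomputable def conj (ψ : EuclideanSpace ℝ (Fin n) → ℝ) (p : EuclideanSpace ℝ (Fin n)) :
    EReal :=
  ⨆ v : EuclideanSpace ℝ (Fin n), ((⟪p, v⟫ : ℝ) : EReal) - ((ψ v : ℝ) : EReal)

/-- Backward boundedness (comparison) for the strict Hamilton–Jacobi inequality in `ℝⁿ`:
if `ψ` is convex, `φ` is `C¹`, coercive and with `|Dφ| → ∞`, and the bounded `C¹` function `ξ`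
satisfies strictly `-∂_t ξ + ψ*(-D_x ξ) < ψ*(-Dφ)` on `[0,T] × ℝⁿ` together with the terminal
bound `ξ(T,·) < φ`, then `ξ(t,x) < φ(x)` on all of `[0,T] × ℝⁿ`. -/
theorem backward_boundedness_strict
    (T : ℝ)
    (ψ : EuclideanSpace ℝ (Fin n) → ℝ) (hψ : ConvexOn ℝ Set.univ ψ)
    (φ : EuclideanSpace ℝ (Fin n) → ℝ) (φ' : EuclideanSpace ℝ (Fin n) → EuclideanSpace ℝ (Fin n))
    (hφ : ∀ x, HasGradientAt φ (φ' x) x) (hφ' : Continuous φ')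
    (hφcoer : Tendsto φ (cocompact (EuclideanSpace ℝ (Fin n))) atTop)
    (hφ'coer : Tendsto (fun x => ‖φ' x‖) (cocompact (EuclideanSpace ℝ (Fin n))) atTop)
    (ξ : ℝ × EuclideanSpace ℝ (Fin n) → ℝ)
    (ξt : ℝ × EuclideanSpace ℝ (Fin n) → ℝ)
    (ξx : ℝ × EuclideanSpace ℝ (Fin n) → EuclideanSpace ℝ (Fin n))
    (hξ : ∀ p : ℝ × EuclideanSpace ℝ (Fin n), p.1 ∈ Icc 0 T →
      HasFDerivAt ξ
        ((ξt p) • ContinuousLinearMap.fst ℝ ℝ (EuclideanSpace ℝ (Fin n)) +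
          (InnerProductSpace.toDual ℝ (EuclideanSpace ℝ (Fin n)) (ξx p) :
              EuclideanSpace ℝ (Fin n) →L[ℝ] ℝ).comp
            (ContinuousLinearMap.snd ℝ ℝ (EuclideanSpace ℝ (Fin n)))) p)
    (hξtc : Continuous ξt) (hξxc : Continuous ξx)
    (hξbdd : ∃ M : ℝ, ∀ p, |ξ p| ≤ M)
    -- strict Hamilton–Jacobi inequality:
    (hHJ : ∀ t ∈ Icc (0 : ℝ) T, ∀ x,
      (((-(ξt (t, x))) : ℝ) : EReal) + conj ψ (-(ξx (t, x))) < conj ψ (-(φ' x)))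
    -- strict terminal bound:
    (hterm : ∀ x, ξ (T, x) < φ x) :
    ∀ t ∈ Icc (0 : ℝ) T, ∀ x, ξ (t, x) < φ x := by
  classical
  by_contra hcon
  push_neg at hcon
  obtain ⟨t0, ht0, x0, hx0⟩ := hcon
  obtain ⟨M, hM⟩ := hξbdd
  have hcont : ∀ p : ℝ × EuclideanSpace ℝ (Fin n), p.1 ∈ Icc 0 T → ContinuousAt ξ p :=
    fun p hp => (hξ p hp).continuousAt
  set K : Set (ℝ × EuclideanSpace ℝ (Fin n)) := {p | p.1 ∈ Icc 0 T ∧ φ p.2 ≤ ξ p} with hKdef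
  have hKne : K.Nonempty := ⟨(t0, x0), ht0, hx0⟩
  -- K is closed
  have hKeq : K = (Prod.fst ⁻¹' Icc 0 T) ∩ (fun p : ℝ × EuclideanSpace ℝ (Fin n) =>
      φ p.2 - ξ p) ⁻¹' Iic 0 := by
    ext p
    simp [hKdef, sub_nonpos, and_comm]
  have hAclosed : IsClosed (Prod.fst ⁻¹' Icc 0 T : Set (ℝ × EuclideanSpace ℝ (Fin n))) :=
    isClosed_Icc.preimage continuous_fst
  have hKclosed : IsClosed K := by
    rw [hKeq]
    refine ContinuousOn.preimage_isClosed_of_isClosed ?_ hAclosed isClosed_Iic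
    intro p hp
    exact (((hφ p.2).hasFDerivAt.continuousAt.comp continuous_snd.continuousAt).sub
      (hcont p hp)).continuousWithinAt
  -- K is compact
  have hev : ∀ᶠ x in cocompact (EuclideanSpace ℝ (Fin n)), M < φ x :=
    hφcoer.eventually_gt_atTop M
  obtain ⟨C, hCc, hCsub⟩ := hasBasis_cocompact.eventually_iff.mp hev
  have hKsub : K ⊆ Icc 0 T ×ˢ C := by
    rintro ⟨t, x⟩ ⟨ht, hx⟩
    refine ⟨ht, ?_⟩
    by_contra hxC
    have h1 : M < φ x := hCsub hxC
    have h2 : φ x ≤ M := hx.trans ((le_abs_self _).trans (hM _))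
    exact absurd h2 (not_le.mpr h1)
  have hKcompact : IsCompact K :=
    (isCompact_Icc.prod hCc).of_isClosed_subset hKclosed hKsub
  -- maximal time point
  obtain ⟨pbar, hpK, hpmax⟩ :=
    hKcompact.exists_isMaxOn hKne continuous_fst.continuousOn
  obtain ⟨tb, xb⟩ := pbar
  obtain ⟨htb, hxb⟩ := hpK
  simp only at htb hxb hpmax
  -- tb < T
  have htbT : tb < T := by
    rcases lt_or_eq_of_le htb.2 with h | h
    · exact h
    · exact absurd hxb (not_le.mpr (h ▸ hterm xb))
  -- strictly below level for t > tb
  have hafter : ∀ x, ∀ t, t ∈ Ioc tb T → ξ (t, x) < φ x := by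
    intro x t ht
    by_contra hge
    push_neg at hge
    have hmem : (t, x) ∈ K := ⟨⟨htb.1.trans ht.1.le, ht.2⟩, hge⟩
    exact absurd (hpmax hmem) (not_le.mpr ht.1)
  -- at time tb, ξ ≤ φ everywhere
  have hle : ∀ x, ξ (tb, x) ≤ φ x := by
    intro x
    have htend : Tendsto (fun t : ℝ => ξ (t, x)) (𝓝[>] tb) (𝓝 (ξ (tb, x))) :=
      ((hcont (tb, x) ⟨htb.1, htb.2⟩).tendsto).comp
        (((continuous_id.prodMk continuous_const).tendsto tb).mono_left nhdsWithin_le_nhds)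
    refine le_of_tendsto htend ?_
    filter_upwards [Ioc_mem_nhdsGT_of_mem ⟨le_refl tb, htbT⟩] with t ht
    exact (hafter x t ht).le
  have heq : ξ (tb, xb) = φ xb := le_antisymm (hle xb) hxb
  -- spatial derivative: gradient matching at the max
  have hL := hξ (tb, xb) htb
  have hι : HasFDerivAt (fun x : EuclideanSpace ℝ (Fin n) => ((tb : ℝ), x))
      (ContinuousLinearMap.inr ℝ ℝ (EuclideanSpace ℝ (Fin n))) xb :=
    hasFDerivAt_prodMk_right tb xb
  have hgradx : HasFDerivAt (fun x => ξ (tb, x))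
      ((InnerProductSpace.toDual ℝ (EuclideanSpace ℝ (Fin n)) (ξx (tb, xb)) :
        EuclideanSpace ℝ (Fin n) →L[ℝ] ℝ)) xb := by
    have := hL.comp xb hι
    refine this.congr_fderiv ?_
    ext v
    simp
  have hF : HasFDerivAt (fun x => ξ (tb, x) - φ x)
      ((InnerProductSpace.toDual ℝ (EuclideanSpace ℝ (Fin n)) (ξx (tb, xb)) :
          EuclideanSpace ℝ (Fin n) →L[ℝ] ℝ) -
        (InnerProductSpace.toDual ℝ (EuclideanSpace ℝ (Fin n)) (φ' xb) :
          EuclideanSpace ℝ (Fin n) →L[ℝ] ℝ)) xb :=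
    hgradx.sub (hφ xb).hasFDerivAt
  have hmaxF : IsLocalMax (fun x => ξ (tb, x) - φ x) xb := by
    refine Filter.Eventually.of_forall fun x => ?_
    show ξ (tb, x) - φ x ≤ ξ (tb, xb) - φ xb
    rw [heq, sub_self]
    exact sub_nonpos.mpr (hle x)
  have h0 := hmaxF.hasFDerivAt_eq_zero hF
  have hduals : (InnerProductSpace.toDual ℝ (EuclideanSpace ℝ (Fin n)) (ξx (tb, xb)) :
      EuclideanSpace ℝ (Fin n) →L[ℝ] ℝ) =
      (InnerProductSpace.toDual ℝ (EuclideanSpace ℝ (Fin n)) (φ' xb) :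
      EuclideanSpace ℝ (Fin n) →L[ℝ] ℝ) := by
    rwa [sub_eq_zero] at h0
  have hxeq : ξx (tb, xb) = φ' xb :=
    (InnerProductSpace.toDual ℝ (EuclideanSpace ℝ (Fin n))).injective
      (by exact_mod_cast hduals)
  -- time derivative ≤ 0
  have hιt : HasFDerivAt (fun t : ℝ => (t, xb))
      (ContinuousLinearMap.inl ℝ ℝ (EuclideanSpace ℝ (Fin n))) tb :=
    hasFDerivAt_prodMk_left tb xb
  have hdt : HasDerivAt (fun t : ℝ => ξ (t, xb)) (ξt (tb, xb)) tb := by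
    have hcomp := (hL.comp tb hιt).hasDerivAt
    exact hcomp.congr_deriv (by simp)
  have hts : ξt (tb, xb) ≤ 0 := by
    have hW : HasDerivWithinAt (fun t : ℝ => ξ (t, xb)) (ξt (tb, xb)) (Ioi tb) tb :=
      hdt.hasDerivWithinAt
    rw [hasDerivWithinAt_iff_tendsto_slope' (notMem_Ioi.mpr le_rfl)] at hW
    refine le_of_tendsto hW ?_
    filter_upwards [Ioc_mem_nhdsGT_of_mem ⟨le_refl tb, htbT⟩] with t ht
    rw [slope_def_field]
    have hnum : ξ (t, xb) - ξ (tb, xb) ≤ 0 := by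
      rw [heq]
      exact sub_nonpos.mpr (hafter xb t ht).le
    have hden : (0 : ℝ) ≤ t - tb := sub_nonneg.mpr ht.1.le
    exact div_nonpos_iff.mpr (Or.inr ⟨hnum, hden⟩)
  -- contradiction with the strict HJ inequality
  have h := hHJ tb htb xb
  rw [hxeq] at h
  have h0' : (0 : EReal) ≤ ((-(ξt (tb, xb)) : ℝ) : EReal) := by
    exact_mod_cast neg_nonneg.mpr hts
  have hge : conj ψ (-(φ' xb)) ≤
      ((-(ξt (tb, xb)) : ℝ) : EReal) + conj ψ (-(φ' xb)) := by
    calc conj ψ (-(φ' xb)) = 0 + conj ψ (-(φ' xb)) := (zero_add _).symm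
    _ ≤ _ := add_le_add h0' le_rfl
  exact absurd h (not_lt.mpr hge)

end Stmt16
end
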